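/- arXiv:1707.07880 — 8 statements merged into one kernel-verified Lean document; each statement's English description precedes it below -/
import Mathlib

section
/- Let d : ℝ → ℝ be positive and 1-Lipschitz (|d(x) − d(y)| ≤ |x − y| for all x,y), and assume ∫_0^∞ dx/d(x) = +∞ and ∫_{−∞}^0 dx/d(x) = +∞. Then for every c ∈ (0,1) there exists a strictly increasing sequence (s_n)_{n∈ℤ} of real numbers with s_n → +∞ as n → +∞ and s_n → −∞ as n → −∞, such that ∫_{s_n}^{s_{n+1}} dx/d(x) = c for every n ∈ ℤ, and for every n and every x ∈ [s_n, s_{n+1}] one has (c/(1+c))·d(x) ≤ s_{n+1} − s_n ≤ (c/(1−c))·d(x). -/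
open MeasureTheory Filter Set

theorem stmt2
    (d : ℝ → ℝ) (hd0 : ∀ x, 0 < d x)
    (hlip : ∀ x y : ℝ, |d x - d y| ≤ |x - y|)
    (hdivPos : ∫⁻ x in Set.Ioi (0 : ℝ), ENNReal.ofReal (1 / d x) = ⊤)
    (hdivNeg : ∫⁻ x in Set.Iio (0 : ℝ), ENNReal.ofReal (1 / d x) = ⊤) :
    ∀ c ∈ Set.Ioo (0 : ℝ) 1, ∃ s : ℤ → ℝ,
      StrictMono s ∧ Tendsto s atTop atTop ∧ Tendsto s atBot atBot ∧
      (∀ n : ℤ, ∫ x in Set.Ico (s n) (s (n + 1)), 1 / d x = c) ∧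
      (∀ n : ℤ, ∀ x ∈ Set.Icc (s n) (s (n + 1)),
        c / (1 + c) * d x ≤ s (n + 1) - s n ∧ s (n + 1) - s n ≤ c / (1 - c) * d x) := by
  intro c hc
  obtain ⟨hc0, hc1⟩ := hc
  have hcont : Continuous d := by
    have : LipschitzWith 1 d := by
      apply LipschitzWith.of_dist_le_mul
      intro x y
      simpa [Real.dist_eq] using hlip x y
    exact this.continuous
  have hgcont : Continuous fun x => 1 / d x :=
    continuous_const.div hcont fun x => (hd0 x).ne'
  have hgpos : ∀ x, 0 < 1 / d x := fun x => one_div_pos.2 (hd0 x)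
  have hint : ∀ a b : ℝ, IntervalIntegrable (fun x => 1 / d x) volume a b :=
    fun a b => hgcont.intervalIntegrable a b
  set F : ℝ → ℝ := fun t => ∫ x in (0:ℝ)..t, 1 / d x with hFdef
  have hFsub : ∀ a b : ℝ, F b - F a = ∫ x in a..b, 1 / d x := by
    intro a b
    rw [hFdef]
    simp only
    rw [← intervalIntegral.integral_add_adjacent_intervals (hint 0 a) (hint a b)]
    ring
  have hFmono : StrictMono F := by
    intro a b hab
    have h1 : 0 < ∫ x in a..b, 1 / d x :=
      intervalIntegral.intervalIntegral_pos_of_pos (hint a b) hgpos hab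
    have := hFsub a b
    linarith
  have hFcont : Continuous F := intervalIntegral.continuous_primitive hint 0
  have hF0 : F 0 = 0 := intervalIntegral.integral_same
  have hmeas : Measurable fun x => ENNReal.ofReal (1 / d x) :=
    hgcont.measurable.ennreal_ofReal
  have key : ∀ a b : ℝ, a ≤ b →
      ∫⁻ x in Set.Ioc a b, ENNReal.ofReal (1 / d x) = ENNReal.ofReal (F b - F a) := by
    intro a b hab
    rw [hFsub, intervalIntegral.integral_of_le hab,
      ofReal_integral_eq_lintegral_ofReal (hint a b).1
        (ae_of_all _ fun x => (hgpos x).le)]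
  -- tendsto atTop
  have htop : Tendsto F atTop atTop := by
    refine tendsto_atTop_atTop_of_monotone' hFmono.monotone ?_
    rintro ⟨M, hM⟩
    have hcover : AECover (volume.restrict (Set.Ioi (0:ℝ))) atTop (fun n : ℕ => Set.Iic (n:ℝ)) :=
      aecover_Iic tendsto_natCast_atTop_atTop
    have hten := hcover.lintegral_tendsto_of_countably_generated
      (f := fun x => ENNReal.ofReal (1 / d x)) hmeas.aemeasurable
    rw [hdivPos] at hten
    have hev := hten.eventually_const_lt (show ENNReal.ofReal M < ⊤ from ENNReal.ofReal_lt_top)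
    obtain ⟨n, hn⟩ := hev.exists
    have heq : ∫⁻ x in Set.Iic (n:ℝ), ENNReal.ofReal (1 / d x)
        ∂(volume.restrict (Set.Ioi (0:ℝ)))
        = ENNReal.ofReal (F n - F 0) := by
      rw [Measure.restrict_restrict measurableSet_Iic, Set.inter_comm, Set.Ioi_inter_Iic]
      exact key 0 n (Nat.cast_nonneg n)
    rw [heq] at hn
    have : F n - F 0 ≤ M := by
      have := hM (Set.mem_range_self (f := F) (n:ℝ))
      linarith [hF0]
    exact absurd hn (not_lt.2 (ENNReal.ofReal_le_ofReal this))
  -- tendsto atBot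
  have hbot : Tendsto F atBot atBot := by
    refine tendsto_atBot_atBot_of_monotone' hFmono.monotone ?_
    rintro ⟨B, hB⟩
    have hcover : AECover (volume.restrict (Set.Iio (0:ℝ))) atTop
        (fun n : ℕ => Set.Ioi (-(n:ℝ))) :=
      aecover_Ioi (tendsto_neg_atTop_atBot.comp tendsto_natCast_atTop_atTop)
    have hten := hcover.lintegral_tendsto_of_countably_generated
      (f := fun x => ENNReal.ofReal (1 / d x)) hmeas.aemeasurable
    rw [hdivNeg] at hten
    have hev := hten.eventually_const_lt (show ENNReal.ofReal (F 0 - B) < ⊤ from ENNReal.ofReal_lt_top)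
    obtain ⟨n, hn⟩ := hev.exists
    have heq : ∫⁻ x in Set.Ioi (-(n:ℝ)), ENNReal.ofReal (1 / d x)
        ∂(volume.restrict (Set.Iio (0:ℝ)))
        = ENNReal.ofReal (F 0 - F (-(n:ℝ))) := by
      rw [Measure.restrict_restrict measurableSet_Ioi, Set.inter_comm, Set.Iio_inter_Ioi,
        Measure.restrict_congr_set Ioo_ae_eq_Ioc]
      exact key (-(n:ℝ)) 0 (neg_nonpos.mpr (Nat.cast_nonneg n))
    rw [heq] at hn
    have : F 0 - F (-(n:ℝ)) ≤ F 0 - B := by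
      have := hB (Set.mem_range_self (f := F) (-(n:ℝ)))
      linarith
    exact absurd hn (not_lt.2 (ENNReal.ofReal_le_ofReal this))
  have hsurj : Function.Surjective F := hFcont.surjective htop hbot
  choose s hs using fun n : ℤ => hsurj ((n : ℝ) * c)
  have hslt : ∀ n : ℤ, s n < s (n + 1) := by
    intro n
    have : F (s n) < F (s (n + 1)) := by
      rw [hs, hs]
      push_cast
      nlinarith
    exact hFmono.lt_iff_lt.mp this
  have hsmono : StrictMono s := strictMono_int_of_lt_succ hslt
  have hsTop : Tendsto s atTop atTop := by
    rw [tendsto_atTop_atTop]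
    intro M
    refine ⟨max 0 ⌈F M / c⌉, fun m hm => ?_⟩
    have h1 : (⌈F M / c⌉ : ℝ) ≤ (m : ℝ) := by
      exact_mod_cast le_trans (le_max_right _ _) hm
    have h2 : F M / c ≤ (m : ℝ) := le_trans (Int.le_ceil _) h1
    have h3 : F M ≤ (m : ℝ) * c := by
      rw [div_le_iff₀ hc0] at h2; linarith
    have : F M ≤ F (s m) := by rw [hs]; exact h3
    exact hFmono.le_iff_le.mp this
  have hsBot : Tendsto s atBot atBot := by
    rw [tendsto_atBot_atBot]
    intro M
    refine ⟨min 0 ⌊F M / c⌋, fun m hm => ?_⟩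
    have h1 : (m : ℝ) ≤ (⌊F M / c⌋ : ℝ) := by
      exact_mod_cast le_trans hm (min_le_right _ _)
    have h2 : (m : ℝ) ≤ F M / c := le_trans h1 (Int.floor_le _)
    have h3 : (m : ℝ) * c ≤ F M := by
      rw [le_div_iff₀ hc0] at h2; linarith
    have : F (s m) ≤ F M := by rw [hs]; exact h3
    exact hFmono.le_iff_le.mp this
  have hIoc : ∀ n : ℤ, ∫ x in Set.Ioc (s n) (s (n + 1)), 1 / d x = c := by
    intro n
    rw [← intervalIntegral.integral_of_le (hslt n).le, ← hFsub, hs, hs]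
    push_cast
    ring
  refine ⟨s, hsmono, hsTop, hsBot, ?_, ?_⟩
  · intro n
    rw [Measure.restrict_congr_set Ico_ae_eq_Ioc]
    exact hIoc n
  · intro n x hx
    set a := s n with ha
    set b := s (n + 1) with hb
    set L := b - a with hL
    have hLpos : 0 < L := by simp only [hL]; linarith [hslt n]
    have hdy : ∀ y ∈ Set.Ioc a b, d x - L ≤ d y ∧ d y ≤ d x + L := by
      intro y hy
      have hxy : |x - y| ≤ L := by
        rw [abs_le]
        constructor <;> [linarith [hx.1, hy.2]; linarith [hx.2, hy.1]]
      have := (abs_le.mp (le_trans (hlip x y) hxy))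
      constructor <;> linarith
    have hvol : (volume (Set.Ioc a b)).toReal = L := by
      rw [Real.volume_Ioc, ENNReal.toReal_ofReal hLpos.le]
    have hconst_int : ∀ r : ℝ, IntegrableOn (fun _ : ℝ => r) (Set.Ioc a b) volume :=
      fun r => integrableOn_const measure_Ioc_lt_top.ne
    have hupper : L ≤ c / (1 - c) * d x := by
      have hmono := setIntegral_mono_on (hconst_int (1 / (d x + L))) (hint a b).1
        measurableSet_Ioc (fun y hy =>
          one_div_le_one_div_of_le (hd0 y) (hdy y hy).2)
      rw [setIntegral_const, measureReal_def, hvol, smul_eq_mul, hIoc n] at hmono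
      have hdxL : 0 < d x + L := by linarith [hd0 x]
      have h1 : L ≤ c * (d x + L) := by
        rw [mul_one_div, div_le_iff₀ hdxL] at hmono
        exact hmono
      rw [div_mul_eq_mul_div, le_div_iff₀ (by linarith : (0:ℝ) < 1 - c)]
      nlinarith
    have hlower : c / (1 + c) * d x ≤ L := by
      by_cases hcase : d x ≤ L
      · have hfr : c / (1 + c) ≤ 1 := by
          rw [div_le_one (by linarith)]; linarith
        nlinarith [hd0 x]
      · push_neg at hcase
        have hdxL : 0 < d x - L := by linarith
        have hmono := setIntegral_mono_on (hint a b).1 (hconst_int (1 / (d x - L)))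
          measurableSet_Ioc (fun y hy =>
            one_div_le_one_div_of_le (by linarith [(hdy y hy).1]) (by linarith [(hdy y hy).1]))
        rw [setIntegral_const, measureReal_def, hvol, smul_eq_mul, hIoc n] at hmono
        have h1 : c * (d x - L) ≤ L := by
          rw [mul_one_div, le_div_iff₀ hdxL] at hmono
          exact hmono
        rw [div_mul_eq_mul_div, div_le_iff₀ (by linarith : (0:ℝ) < 1 + c)]
        nlinarith
    exact ⟨hlower, hupper⟩
end

section
/- Let d : ℝ → ℝ be positive and 1-Lipschitz. Let (I_n)_{n∈ℤ} and (Ĩ_m)_{m∈ℤ} be two partitions of ℝ into consecutive bounded half-open intervals (left-closed, right-open, listed in increasing order, with endpoints tending to ±∞) such that ∫_{I_n} dx/d(x) = c for every n and ∫_{Ĩ_m} dx/d(x) = c̃ for every m, where c, c̃ ∈ (0,1) are constants. Let Γ ⊂ ℝ be measurable and suppose there exist γ ∈ (0,1) and a ≥ 1 with |Γ ∩ I_n^a| ≥ γ·a·|I_n| for every n ∈ ℤ. Then there exist γ̃ ∈ (0,1) and ã ≥ 1 such that |Γ ∩ Ĩ_m^{ã}| ≥ γ̃·ã·|Ĩ_m|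 for every m ∈ ℤ. -/
open MeasureTheory Filter Set

/-- The interval with the same center as `[u, v]` and length `a * (v - u)`. -/
def ampIcc (u v a : ℝ) : Set ℝ :=
  Set.Icc ((u + v) / 2 - a * (v - u) / 2) ((u + v) / 2 + a * (v - u) / 2)

private lemma exists_between_aux (s : ℤ → ℝ) (hs : StrictMono s)
    (hstop : Tendsto s atTop atTop) (hsbot : Tendsto s atBot atBot) (x : ℝ) :
    ∃ n : ℤ, s n ≤ x ∧ x < s (n + 1) := by
  obtain ⟨N, hN⟩ := (hstop.eventually (eventually_gt_atTop x)).exists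
  obtain ⟨M, hM⟩ := (hsbot.eventually (eventually_le_atBot x)).exists
  obtain ⟨lb, hlb, hmin⟩ := Int.exists_least_of_bdd (P := fun n => x < s n)
    ⟨M + 1, fun z hz => by
      by_contra h
      push_neg at h
      have : s z ≤ s M := hs.monotone (by omega)
      linarith⟩ ⟨N, hN⟩
  refine ⟨lb - 1, ?_, by simpa using hlb⟩
  by_contra h
  push_neg at h
  have := hmin _ h
  omega

private lemma integrable_one_div (d : ℝ → ℝ) (hd0 : ∀ x, 0 < d x)
    (hlip : ∀ x y : ℝ, |d x - d y| ≤ |x - y|) (u v : ℝ) :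
    IntegrableOn (fun x => 1 / d x) (Set.Ico u v) := by
  have hdc : Continuous d := by
    have : LipschitzWith 1 d := LipschitzWith.of_dist_le_mul (fun x y => by
      simpa [Real.dist_eq] using hlip x y)
    exact this.continuous
  have hcont : Continuous fun x => 1 / d x :=
    continuous_const.div hdc (fun x => (hd0 x).ne')
  exact (hcont.integrableOn_Icc (a := u) (b := v)).mono_set Set.Ico_subset_Icc_self

/-- Length upper bound: `(1 - k) * (v - u) ≤ k * d z` for `z ∈ [u, v]`. -/
private lemma len_le_aux (d : ℝ → ℝ) (hd0 : ∀ x, 0 < d x)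
    (hlip : ∀ x y : ℝ, |d x - d y| ≤ |x - y|)
    (u v z k : ℝ) (hz : z ∈ Set.Icc u v) (hk0 : 0 < k) (hk1 : k < 1)
    (hint : ∫ x in Set.Ico u v, 1 / d x = k) :
    (1 - k) * (v - u) ≤ k * d z := by
  obtain ⟨hz1, hz2⟩ := hz
  rcases le_or_gt v u with h | h
  · nlinarith [hd0 z]
  · have hpos : 0 < d z + (v - u) := by nlinarith [hd0 z]
    have hmono : ∀ x ∈ Set.Ico u v, 1 / (d z + (v - u)) ≤ 1 / d x := by
      intro x hx
      have hxz : |x - z| ≤ v - u := by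
        rw [abs_le]
        constructor <;> [linarith [hx.2.le, hx.1]; linarith [hx.2.le, hx.1]]
      have hdx : d x ≤ d z + (v - u) := by
        have := (abs_le.mp (hlip x z)).2
        linarith [hxz]
      exact one_div_le_one_div_of_le (hd0 x) hdx
    have hI : ∫ x in Set.Ico u v, (1 / (d z + (v - u))) ≤ ∫ x in Set.Ico u v, 1 / d x := by
      apply setIntegral_mono_on
      · exact (integrableOn_const_iff).mpr (Or.inr (by rw [Real.volume_Ico]; exact ENNReal.ofReal_lt_top))
      · exact integrable_one_div d hd0 hlip u v
      · exact measurableSet_Ico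
      · exact hmono
    have hconst : ∫ x in Set.Ico u v, (1 / (d z + (v - u))) = (v - u) * (1 / (d z + (v - u))) := by
      rw [setIntegral_const, measureReal_def, Real.volume_Ico, ENNReal.toReal_ofReal (by linarith), smul_eq_mul]
    rw [hconst, hint] at hI
    rw [mul_one_div, div_le_iff₀ hpos] at hI
    nlinarith

/-- Length lower bound: `k * d z ≤ (1 + k) * (v - u)` for `z ∈ [u, v]`. -/
private lemma le_len_aux (d : ℝ → ℝ) (hd0 : ∀ x, 0 < d x)
    (hlip : ∀ x y : ℝ, |d x - d y| ≤ |x - y|)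
    (u v z k : ℝ) (hz : z ∈ Set.Icc u v) (hk0 : 0 < k)
    (hint : ∫ x in Set.Ico u v, 1 / d x = k) :
    k * d z ≤ (1 + k) * (v - u) := by
  obtain ⟨hz1, hz2⟩ := hz
  by_contra hcon
  push_neg at hcon
  have huv : u < v := by
    by_contra h
    push_neg at h
    rw [Set.Ico_eq_empty (not_lt.mpr h)] at hint
    simp at hint
    linarith
  have hdz : v - u < d z := by nlinarith
  have hpos : 0 < d z - (v - u) := by linarith
  have hmono : ∀ x ∈ Set.Ico u v, 1 / d x ≤ 1 / (d z - (v - u)) := by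
    intro x hx
    have hxz : |x - z| ≤ v - u := by
      rw [abs_le]
      constructor <;> [linarith [hx.2.le, hx.1]; linarith [hx.2.le, hx.1]]
    have hdx : d z - (v - u) ≤ d x := by
      have := (abs_le.mp (hlip x z)).1
      linarith [hxz]
    exact one_div_le_one_div_of_le hpos hdx
  have hI : ∫ x in Set.Ico u v, 1 / d x ≤ ∫ x in Set.Ico u v, (1 / (d z - (v - u))) := by
    apply setIntegral_mono_on
    · exact integrable_one_div d hd0 hlip u v
    · exact (integrableOn_const_iff).mpr (Or.inr (by rw [Real.volume_Ico]; exact ENNReal.ofReal_lt_top))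
    · exact measurableSet_Ico
    · exact hmono
  have hconst : ∫ x in Set.Ico u v, (1 / (d z - (v - u))) = (v - u) * (1 / (d z - (v - u))) := by
    rw [setIntegral_const, measureReal_def, Real.volume_Ico, ENNReal.toReal_ofReal (by linarith), smul_eq_mul]
  rw [hint, hconst] at hI
  rw [mul_one_div, le_div_iff₀ hpos] at hI
  nlinarith

set_option maxHeartbeats 1000000 in
theorem stmt3
    (d : ℝ → ℝ) (hd0 : ∀ x, 0 < d x)
    (hlip : ∀ x y : ℝ, |d x - d y| ≤ |x - y|)
    (c c' : ℝ) (hc : c ∈ Set.Ioo (0 : ℝ) 1) (hc' : c' ∈ Set.Ioo (0 : ℝ) 1)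
    (s t : ℤ → ℝ)
    (hs : StrictMono s) (hstop : Tendsto s atTop atTop) (hsbot : Tendsto s atBot atBot)
    (ht : StrictMono t) (httop : Tendsto t atTop atTop) (htbot : Tendsto t atBot atBot)
    (hsint : ∀ n : ℤ, ∫ x in Set.Ico (s n) (s (n + 1)), 1 / d x = c)
    (htint : ∀ m : ℤ, ∫ x in Set.Ico (t m) (t (m + 1)), 1 / d x = c')
    (Γ : Set ℝ) (hΓ : MeasurableSet Γ)
    (γ a : ℝ) (hγ : γ ∈ Set.Ioo (0 : ℝ) 1) (ha : 1 ≤ a)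
    (hdens : ∀ n : ℤ, ENNReal.ofReal (γ * a * (s (n + 1) - s n))
      ≤ volume (Γ ∩ ampIcc (s n) (s (n + 1)) a)) :
    ∃ γ' ∈ Set.Ioo (0 : ℝ) 1, ∃ a' : ℝ, 1 ≤ a' ∧
      ∀ m : ℤ, ENNReal.ofReal (γ' * a' * (t (m + 1) - t m))
        ≤ volume (Γ ∩ ampIcc (t m) (t (m + 1)) a') := by
  obtain ⟨hc0, hc1⟩ := hc
  obtain ⟨hc'0, hc'1⟩ := hc'
  obtain ⟨hγ0, hγ1⟩ := hγ
  have hApos : 0 < (1 - c) * c' := by nlinarith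
  have hBpos : 0 < c * (1 + c') := by nlinarith
  have hA'pos : 0 < (1 - c') * c := by nlinarith
  have hB'pos : 0 < c' * (1 + c) := by nlinarith
  set a' : ℝ := (a + 1) * ((c * (1 + c')) / ((1 - c) * c')) + 1 with ha'def
  have ha'1 : 1 ≤ a' := by
    have h1 : 0 ≤ (a + 1) * ((c * (1 + c')) / ((1 - c) * c')) := by positivity
    rw [ha'def]
    linarith
  have ha'pos : 0 < a' := lt_of_lt_of_le one_pos ha'1
  set γ' : ℝ := min (γ * a * ((1 - c') * c) / ((c' * (1 + c)) * a')) (1 / 2) with hγ'def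
  have hγ'0 : 0 < γ' := by
    apply lt_min
    · positivity
    · norm_num
  have hγ'le : γ' ≤ γ * a * ((1 - c') * c) / ((c' * (1 + c)) * a') := min_le_left _ _
  have hγ'half : γ' ≤ 1 / 2 := min_le_right _ _
  clear_value a' γ'
  refine ⟨γ', ⟨hγ'0, lt_of_le_of_lt hγ'half (by norm_num)⟩, a', ha'1, ?_⟩
  intro m
  obtain ⟨n, hn1, hn2⟩ := exists_between_aux s hs hstop hsbot (t m)
  have hzI : t m ∈ Set.Icc (s n) (s (n + 1)) := ⟨hn1, hn2.le⟩
  have hzJ : t m ∈ Set.Icc (t m) (t (m + 1)) := ⟨le_refl _, (ht (lt_add_one m)).le⟩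
  have hLpos : 0 < s (n + 1) - s n := sub_pos.2 (hs (lt_add_one n))
  have hL'pos : 0 < t (m + 1) - t m := sub_pos.2 (ht (lt_add_one m))
  have h1 : (1 - c) * (s (n + 1) - s n) ≤ c * d (t m) :=
    len_le_aux d hd0 hlip _ _ _ _ hzI hc0 hc1 (hsint n)
  have h2 : c * d (t m) ≤ (1 + c) * (s (n + 1) - s n) :=
    le_len_aux d hd0 hlip _ _ _ _ hzI hc0 (hsint n)
  have h3 : (1 - c') * (t (m + 1) - t m) ≤ c' * d (t m) :=
    len_le_aux d hd0 hlip _ _ _ _ hzJ hc'0 hc'1 (htint m)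
  have h4 : c' * d (t m) ≤ (1 + c') * (t (m + 1) - t m) :=
    le_len_aux d hd0 hlip _ _ _ _ hzJ hc'0 (htint m)
  -- length comparability
  have hAB : ((1 - c) * c') * (s (n + 1) - s n) ≤ (c * (1 + c')) * (t (m + 1) - t m) := by
    nlinarith [mul_le_mul_of_nonneg_left h1 hc'0.le, mul_le_mul_of_nonneg_left h4 hc0.le]
  have hA'B' : ((1 - c') * c) * (t (m + 1) - t m) ≤ (c' * (1 + c)) * (s (n + 1) - s n) := by
    nlinarith [mul_le_mul_of_nonneg_left h3 hc0.le, mul_le_mul_of_nonneg_left h2 hc'0.le]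
  -- key inequality for inclusion
  have hkey : (a + 1) * (s (n + 1) - s n) + (t (m + 1) - t m) ≤ a' * (t (m + 1) - t m) := by
    have hL : s (n + 1) - s n ≤ (c * (1 + c')) / ((1 - c) * c') * (t (m + 1) - t m) := by
      rw [div_mul_eq_mul_div, le_div_iff₀ hApos]
      nlinarith [hAB]
    have ha1 : (0 : ℝ) ≤ a + 1 := by linarith
    have := mul_le_mul_of_nonneg_left hL ha1
    rw [ha'def]
    nlinarith [this]
  -- inclusion of amplified intervals
  have hsub : ampIcc (s n) (s (n + 1)) a ⊆ ampIcc (t m) (t (m + 1)) a' := by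
    unfold ampIcc
    apply Set.Icc_subset_Icc
    · linarith [hkey, hn1, hn2.le, hzJ.2]
    · linarith [hkey, hn1, hn2.le, hzJ.2]
  -- density transfer
  have hreal : γ' * a' * (t (m + 1) - t m) ≤ γ * a * (s (n + 1) - s n) := by
    have h6 : γ' * ((c' * (1 + c)) * a') ≤ γ * a * ((1 - c') * c) := by
      rw [← le_div_iff₀ (by positivity)]
      exact hγ'le
    have h7 := mul_le_mul_of_nonneg_right h6 hL'pos.le
    have h8 := mul_le_mul_of_nonneg_left hA'B' (by positivity : (0:ℝ) ≤ γ * a)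
    nlinarith [h7, h8, hB'pos, ha'pos, hγ'0]
  calc ENNReal.ofReal (γ' * a' * (t (m + 1) - t m))
      ≤ ENNReal.ofReal (γ * a * (s (n + 1) - s n)) := ENNReal.ofReal_le_ofReal hreal
    _ ≤ volume (Γ ∩ ampIcc (s n) (s (n + 1)) a) := hdens n
    _ ≤ volume (Γ ∩ ampIcc (t m) (t (m + 1)) a') :=
        measure_mono (Set.inter_subset_inter (subset_refl Γ) hsub)
end

section
/- Let Γ ⊂ ℝ be a Lebesgue-measurable set. The following are equivalent: (a) Γ is relatively dense, i.e. there exist γ > 0 and ℓ > 0 such that |Γ ∩ [x, x+ℓ)| ≥ γℓ for every x ∈ ℝ; (b) there exists y > 0 such that inf_{x∈ℝ} ω_{x+iy}(Γ) > 0; (c) for every y > 0, inf_{x∈ℝ} ω_{x+iy}(Γ) > 0. -/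
open MeasureTheory Filter Set

/-- The Poisson kernel of the upper half-plane at `z`. -/
noncomputable def poissonKernelUHP (z : ℂ) (t : ℝ) : ℝ :=
  (1 / Real.pi) * z.im / ((z.re - t) ^ 2 + z.im ^ 2)

/-- The harmonic measure of `E ⊆ ℝ` at the point `z` of the upper half-plane. -/
noncomputable def harmonicMeasure (z : ℂ) (E : Set ℝ) : ℝ :=
  ∫ t in E, poissonKernelUHP z t

open Real

lemma pk_eq {x y : ℝ} (hy : 0 < y) (t : ℝ) :
    poissonKernelUHP ⟨x, y⟩ t = (Real.pi * y)⁻¹ * (1 + (t / y - x / y) ^ 2)⁻¹ := by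
  have hπ := Real.pi_pos
  simp only [poissonKernelUHP]
  have h1 : (x - t) ^ 2 + y ^ 2 > 0 := by positivity
  have h2 : 1 + (t / y - x / y) ^ 2 > 0 := by positivity
  field_simp
  ring

lemma pk_nonneg {x y : ℝ} (hy : 0 ≤ y) (t : ℝ) : 0 ≤ poissonKernelUHP ⟨x, y⟩ t := by
  have hπ := Real.pi_pos
  simp only [poissonKernelUHP]
  positivity

lemma pk_le {x y : ℝ} (hy : 0 < y) (t : ℝ) : poissonKernelUHP ⟨x, y⟩ t ≤ (Real.pi * y)⁻¹ := by
  have hπ := Real.pi_pos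
  rw [pk_eq hy]
  have h2 : (1 : ℝ) ≤ 1 + (t / y - x / y) ^ 2 := by nlinarith [sq_nonneg (t / y - x / y)]
  exact mul_le_of_le_one_right (by positivity) (inv_le_one_of_one_le₀ h2)

lemma pk_integrable {x y : ℝ} (hy : 0 < y) : Integrable (poissonKernelUHP ⟨x, y⟩) := by
  have h : Integrable (fun t : ℝ => (Real.pi * y)⁻¹ * (1 + ((t - x) / y) ^ 2)⁻¹) := by
    exact ((integrable_inv_one_add_sq.comp_div hy.ne').comp_sub_right x).const_mul _
  refine h.congr (Filter.Eventually.of_forall fun t => ?_)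
  simp only [pk_eq hy, sub_div]

lemma pk_interval {x y : ℝ} (hy : 0 < y) (a b : ℝ) :
    ∫ t in a..b, poissonKernelUHP ⟨x, y⟩ t
      = (1 / Real.pi) * (arctan ((b - x) / y) - arctan ((a - x) / y)) := by
  have hπ := Real.pi_pos
  calc ∫ t in a..b, poissonKernelUHP ⟨x, y⟩ t
      = ∫ t in a..b, (Real.pi * y)⁻¹ * (1 + (t / y - x / y) ^ 2)⁻¹ := by
        exact intervalIntegral.integral_congr fun t _ => pk_eq hy t
    _ = (Real.pi * y)⁻¹ * ∫ t in a..b, (fun u : ℝ => (1 + u ^ 2)⁻¹) (t / y - x / y) := by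
        rw [intervalIntegral.integral_const_mul]
    _ = (Real.pi * y)⁻¹ * (y • ∫ u in (a / y - x / y)..(b / y - x / y), (1 + u ^ 2)⁻¹) := by
        rw [intervalIntegral.integral_comp_div_sub (fun u : ℝ => (1 + u ^ 2)⁻¹) hy.ne' (x / y)]
    _ = (1 / Real.pi) * (arctan ((b - x) / y) - arctan ((a - x) / y)) := by
        rw [integral_inv_one_add_sq, smul_eq_mul, ← sub_div, ← sub_div]
        field_simp

lemma pk_total {x y : ℝ} (hy : 0 < y) : ∫ t, poissonKernelUHP ⟨x, y⟩ t = 1 := by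
  have hπ := Real.pi_pos
  have h1 : Tendsto (fun L : ℝ => x - L) atTop atBot := by
    simpa only [sub_eq_add_neg] using (tendsto_atBot_add_const_left atTop x tendsto_neg_atTop_atBot : Tendsto (fun L : ℝ => x + -L) atTop atBot)
  have h2 : Tendsto (fun L : ℝ => x + L) atTop atTop :=
    tendsto_atTop_add_const_left atTop x tendsto_id
  have h3 := intervalIntegral_tendsto_integral (pk_integrable hy (x := x)) h1 h2
  have h4 : Tendsto (fun L : ℝ => ∫ t in (x - L)..(x + L), poissonKernelUHP ⟨x, y⟩ t)
      atTop (nhds 1) := by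
    have he : (fun L : ℝ => ∫ t in (x - L)..(x + L), poissonKernelUHP ⟨x, y⟩ t)
        = fun L : ℝ => (1 / Real.pi) * (2 * arctan (L / y)) := by
      funext L
      rw [pk_interval hy]
      have e1 : x + L - x = L := by ring
      have e2 : x - L - x = -L := by ring
      rw [e1, e2, neg_div, arctan_neg]
      ring
    rw [he]
    have harc : Tendsto (fun L : ℝ => arctan (L / y)) atTop (nhds (Real.pi / 2)) := by
      exact (tendsto_nhds_of_tendsto_nhdsWithin tendsto_arctan_atTop).comp
        (tendsto_id.atTop_div_const hy)
    have := (harc.const_mul 2).const_mul (1 / Real.pi)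
    convert this using 2
    field_simp
  exact tendsto_nhds_unique h3 h4


lemma a_imp_c (Γ : Set ℝ) (hΓ : MeasurableSet Γ)
    (h : ∃ γ : ℝ, 0 < γ ∧ ∃ ℓ : ℝ, 0 < ℓ ∧ ∀ x : ℝ,
        ENNReal.ofReal (γ * ℓ) ≤ volume (Γ ∩ Set.Ico x (x + ℓ)))
    (y : ℝ) (hy : 0 < y) :
    ∃ δ : ℝ, 0 < δ ∧ ∀ x : ℝ, δ ≤ harmonicMeasure ⟨x, y⟩ Γ := by
  obtain ⟨γ, hγ, ℓ, hℓ, ha⟩ := h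
  have hπ := Real.pi_pos
  refine ⟨(1 / Real.pi) * y / (ℓ ^ 2 + y ^ 2) * (γ * ℓ), by positivity, fun x => ?_⟩
  set c : ℝ := (1 / Real.pi) * y / (ℓ ^ 2 + y ^ 2) with hc
  set I : Set ℝ := Set.Ico x (x + ℓ) with hI
  have hImeas : MeasurableSet (Γ ∩ I) := hΓ.inter measurableSet_Ico
  have hfin : volume (Γ ∩ I) ≠ ⊤ := by
    refine ne_top_of_le_ne_top ?_ (measure_mono Set.inter_subset_right)
    simp [hI, Real.volume_Ico]
  have hlow : ∀ t ∈ Γ ∩ I, c ≤ poissonKernelUHP ⟨x, y⟩ t := by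
    rintro t ⟨-, ht1, ht2⟩
    have hsq : (x - t) ^ 2 + y ^ 2 ≤ ℓ ^ 2 + y ^ 2 := by nlinarith
    simp only [poissonKernelUHP, hc]
    gcongr
  have h1 : c * (volume (Γ ∩ I)).toReal ≤ ∫ t in Γ ∩ I, poissonKernelUHP ⟨x, y⟩ t :=
    setIntegral_ge_of_const_le_real hImeas hfin hlow ((pk_integrable hy).integrableOn)
  have h2 : ∫ t in Γ ∩ I, poissonKernelUHP ⟨x, y⟩ t ≤ harmonicMeasure ⟨x, y⟩ Γ :=
    setIntegral_mono_set ((pk_integrable hy).integrableOn)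
      (Filter.Eventually.of_forall (pk_nonneg hy.le))
      (HasSubset.Subset.eventuallyLE Set.inter_subset_left)
  have h3 : γ * ℓ ≤ (volume (Γ ∩ I)).toReal := by
    have := ENNReal.toReal_mono hfin (ha x)
    rwa [ENNReal.toReal_ofReal (by positivity)] at this
  have hcpos : 0 < c := by rw [hc]; positivity
  calc c * (γ * ℓ) ≤ c * (volume (Γ ∩ I)).toReal := by
        exact mul_le_mul_of_nonneg_left h3 hcpos.le
    _ ≤ ∫ t in Γ ∩ I, poissonKernelUHP ⟨x, y⟩ t := h1
    _ ≤ harmonicMeasure ⟨x, y⟩ Γ := h2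

lemma b_imp_a (Γ : Set ℝ) (hΓ : MeasurableSet Γ)
    (h : ∃ y : ℝ, 0 < y ∧ ∃ δ : ℝ, 0 < δ ∧ ∀ x : ℝ, δ ≤ harmonicMeasure ⟨x, y⟩ Γ) :
    ∃ γ : ℝ, 0 < γ ∧ ∃ ℓ : ℝ, 0 < ℓ ∧ ∀ x : ℝ,
        ENNReal.ofReal (γ * ℓ) ≤ volume (Γ ∩ Set.Ico x (x + ℓ)) := by
  obtain ⟨y, hy, δ, hδ, hb⟩ := h
  have hπ := Real.pi_pos
  -- choose L with arctan (L / y) > π/2 - π*δ/4 and L > 0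
  have harc : Tendsto (fun L : ℝ => arctan (L / y)) atTop (nhds (Real.pi / 2)) :=
    (tendsto_nhds_of_tendsto_nhdsWithin tendsto_arctan_atTop).comp
      (tendsto_id.atTop_div_const hy)
  have hev : ∀ᶠ L : ℝ in atTop, Real.pi / 2 - Real.pi * δ / 4 < arctan (L / y) :=
    harc.eventually (eventually_gt_nhds (by nlinarith))
  obtain ⟨L, hL1, hL0⟩ := (hev.and (eventually_gt_atTop 0)).exists
  refine ⟨Real.pi * y * δ / 2 / (2 * L), by positivity, 2 * L, by positivity, fun x => ?_⟩
  set cen : ℝ := x + L with hcen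
  set I : Set ℝ := Set.Ioc x (x + 2 * L) with hI
  have hImeas : MeasurableSet I := measurableSet_Ioc
  -- ∫ over I of kernel at cen is ≥ 1 - δ/2
  have hIint : ∫ t in I, poissonKernelUHP ⟨cen, y⟩ t ≥ 1 - δ / 2 := by
    rw [hI, ← intervalIntegral.integral_of_le (by nlinarith), pk_interval hy]
    have e1 : (x + 2 * L - cen) / y = L / y := by rw [hcen]; ring_nf
    have e2 : (x - cen) / y = -(L / y) := by rw [hcen]; ring_nf
    rw [e1, e2, arctan_neg, ge_iff_le,
      show (1 : ℝ) / Real.pi * (arctan (L / y) - -arctan (L / y))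
        = (2 * arctan (L / y)) / Real.pi from by ring, le_div_iff₀ hπ]
    nlinarith [hL1]
  -- tail bound
  have htail : ∫ t in Iᶜ, poissonKernelUHP ⟨cen, y⟩ t ≤ δ / 2 := by
    have := integral_add_compl hImeas (pk_integrable hy (x := cen))
    rw [pk_total hy] at this
    linarith [hIint, this]
  -- split
  have hsplit : harmonicMeasure ⟨cen, y⟩ Γ
      = (∫ t in Γ ∩ I, poissonKernelUHP ⟨cen, y⟩ t) + ∫ t in Γ ∩ Iᶜ, poissonKernelUHP ⟨cen, y⟩ t := by
    rw [harmonicMeasure, ← setIntegral_union (Disjoint.inter_right' _ (Disjoint.inter_left' _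
        disjoint_compl_right)) (hΓ.inter hImeas.compl)
        ((pk_integrable hy).integrableOn) ((pk_integrable hy).integrableOn),
      Set.inter_union_compl]
  have hmono : ∫ t in Γ ∩ Iᶜ, poissonKernelUHP ⟨cen, y⟩ t ≤ ∫ t in Iᶜ, poissonKernelUHP ⟨cen, y⟩ t :=
    setIntegral_mono_set ((pk_integrable hy).integrableOn)
      (Filter.Eventually.of_forall (pk_nonneg hy.le))
      (HasSubset.Subset.eventuallyLE Set.inter_subset_right)
  have hmain : δ / 2 ≤ ∫ t in Γ ∩ I, poissonKernelUHP ⟨cen, y⟩ t := by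
    have := hb cen
    rw [hsplit] at this
    linarith
  -- upper bound by constant
  have hfin : volume (Γ ∩ I) ≠ ⊤ := by
    refine ne_top_of_le_ne_top ?_ (measure_mono Set.inter_subset_right)
    simp [hI, Real.volume_Ioc, ENNReal.mul_eq_top]
  have hup : ∫ t in Γ ∩ I, poissonKernelUHP ⟨cen, y⟩ t
      ≤ (Real.pi * y)⁻¹ * (volume (Γ ∩ I)).toReal := by
    calc ∫ t in Γ ∩ I, poissonKernelUHP ⟨cen, y⟩ t
        ≤ ∫ _ in Γ ∩ I, (Real.pi * y)⁻¹ :=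
          setIntegral_mono_on ((pk_integrable hy).integrableOn)
            (integrableOn_const hfin) (hΓ.inter hImeas)
            (fun t _ => pk_le hy t)
      _ = (Real.pi * y)⁻¹ * (volume (Γ ∩ I)).toReal := by
          rw [setIntegral_const, smul_eq_mul]; simp only [Measure.real]; ring
  have hvol : Real.pi * y * δ / 2 ≤ (volume (Γ ∩ I)).toReal := by
    have h5 : δ / 2 ≤ (Real.pi * y)⁻¹ * (volume (Γ ∩ I)).toReal := le_trans hmain hup
    rw [inv_mul_eq_div, le_div_iff₀ (by positivity)] at h5
    nlinarith
  -- move to Ico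
  have hIoc_le : volume (Γ ∩ I) ≤ volume (Γ ∩ Set.Ico x (x + 2 * L)) := by
    have hsub : Γ ∩ I ⊆ (Γ ∩ Set.Ico x (x + 2 * L)) ∪ {x + 2 * L} := by
      rintro t ⟨htΓ, ht1, ht2⟩
      rcases eq_or_lt_of_le ht2 with he | hlt
      · exact Or.inr (by simp [he])
      · exact Or.inl ⟨htΓ, ht1.le, hlt⟩
    calc volume (Γ ∩ I) ≤ volume ((Γ ∩ Set.Ico x (x + 2 * L)) ∪ {x + 2 * L}) :=
          measure_mono hsub
      _ ≤ volume (Γ ∩ Set.Ico x (x + 2 * L)) + volume {x + 2 * L} := measure_union_le _ _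
      _ = volume (Γ ∩ Set.Ico x (x + 2 * L)) := by simp
  have he : Real.pi * y * δ / 2 / (2 * L) * (2 * L) = Real.pi * y * δ / 2 := by
    field_simp
  rw [he]
  exact le_trans (le_trans (ENNReal.ofReal_le_of_le_toReal hvol) le_rfl) hIoc_le


theorem stmt4 (Γ : Set ℝ) (hΓ : MeasurableSet Γ) :
    ((∃ γ : ℝ, 0 < γ ∧ ∃ ℓ : ℝ, 0 < ℓ ∧ ∀ x : ℝ,
        ENNReal.ofReal (γ * ℓ) ≤ volume (Γ ∩ Set.Ico x (x + ℓ)))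
      ↔ (∃ y : ℝ, 0 < y ∧ ∃ δ : ℝ, 0 < δ ∧ ∀ x : ℝ,
          δ ≤ harmonicMeasure ⟨x, y⟩ Γ))
    ∧
    ((∃ γ : ℝ, 0 < γ ∧ ∃ ℓ : ℝ, 0 < ℓ ∧ ∀ x : ℝ,
        ENNReal.ofReal (γ * ℓ) ≤ volume (Γ ∩ Set.Ico x (x + ℓ)))
      ↔ (∀ y : ℝ, 0 < y → ∃ δ : ℝ, 0 < δ ∧ ∀ x : ℝ,
          δ ≤ harmonicMeasure ⟨x, y⟩ Γ)) := by
  constructor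
  · constructor
    · intro ha
      exact ⟨1, one_pos, a_imp_c Γ hΓ ha 1 one_pos⟩
    · exact b_imp_a Γ hΓ
  · constructor
    · intro ha y hy
      exact a_imp_c Γ hΓ ha y hy
    · intro hc
      exact b_imp_a Γ hΓ ⟨1, one_pos, hc 1 one_pos⟩
end

section
/- Let (I_n)_{n∈ℤ} be a partition of ℝ into bounded half-open intervals and let N ≥ 1. Define the positive Borel measure μ on ℂ by μ(A) = Σ_{n∈ℤ} |{x ∈ I_n : x + i|I_n|/N ∈ A}| (the sum of the arclength measures of the horizontal segments I_n × {|I_n|/N}). Then: (a) for every bounded interval I ⊂ ℝ, μ(S(I)) ≤ |I|; (b) if moreover L ⊂ ℂ⁺ is a nonempty set, d(x) = dist(x, L), α ≥ 1 is such that α^{−1} d(x) ≤ |I_n| ≤ α d(x) for every n and every x ∈ I_n, N₀ ≥ 1, and N ≥ √2·(1+α)·N₀, then for every bounded interval I ⊂ ℝ with S(I^{N₀}) ∩ L ≠ ∅ one has μ(S(I)) = |I|. -/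
open MeasureTheory Filter Set
open scoped ENNReal

/-- The measure putting arclength measure on the horizontal segments
`I_n × {|I_n|/N}`, where `I_n = [s n, s (n+1))`, evaluated on a set `A ⊆ ℂ`. -/
noncomputable def segMeasure (s : ℤ → ℝ) (N : ℝ) (A : Set ℂ) : ℝ≥0∞ :=
  ∑' n : ℤ, volume {x ∈ Set.Ico (s n) (s (n + 1)) |
    (x : ℂ) + Complex.I * ((s (n + 1) - s n) / N) ∈ A}

/-- The Carleson window over the interval `(a, b)`. -/
def carlesonWindow (a b : ℝ) : Set ℂ :=
  {z : ℂ | z.re ∈ Set.Ioo a b ∧ z.im ∈ Set.Ioo 0 (b - a)}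

lemma mem_window_iff (a b x c : ℝ) :
    ((x : ℂ) + Complex.I * (c : ℂ) ∈ carlesonWindow a b) ↔
      (x ∈ Set.Ioo a b ∧ c ∈ Set.Ioo 0 (b - a)) := by
  simp [carlesonWindow, Complex.add_re, Complex.add_im, Complex.mul_re, Complex.mul_im]

lemma exists_idx (s : ℤ → ℝ) (hmono : StrictMono s)
    (htop : Tendsto s atTop atTop) (hbot : Tendsto s atBot atBot) (x : ℝ) :
    ∃ n, x ∈ Set.Ico (s n) (s (n + 1)) := by
  classical
  obtain ⟨m, hm⟩ := (hbot.eventually (eventually_le_atBot x)).exists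
  obtain ⟨k, hk⟩ := (htop.eventually (eventually_gt_atTop x)).exists
  have hbdd : ∃ b : ℤ, ∀ z : ℤ, x < s z → b ≤ z := by
    refine ⟨m + 1, fun z hz => ?_⟩
    have h1 : s m < s z := lt_of_le_of_lt hm hz
    have := hmono.lt_iff_lt.mp h1
    omega
  obtain ⟨n₀, hn₀, hleast⟩ := Int.exists_least_of_bdd hbdd ⟨k, hk⟩
  have h1 : s (n₀ - 1) ≤ x := by
    by_contra h
    push_neg at h
    have := hleast (n₀ - 1) h
    omega
  have h2 : n₀ - 1 + 1 = n₀ := by ring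
  exact ⟨n₀ - 1, h1, by rw [h2]; exact hn₀⟩

lemma tsum_vol (s : ℤ → ℝ) (hmono : StrictMono s)
    (htop : Tendsto s atTop atTop) (hbot : Tendsto s atBot atBot)
    (a b : ℝ) (_hab : a < b) :
    ∑' n : ℤ, volume (Set.Ico (s n) (s (n + 1)) ∩ Set.Ioo a b)
      = ENNReal.ofReal (b - a) := by
  have hdisj : Pairwise (Function.onFun Disjoint
      fun n : ℤ => Set.Ico (s n) (s (n + 1)) ∩ Set.Ioo a b) := by
    intro m n hmn
    have key : ∀ m n : ℤ, m < n →
        Disjoint (Set.Ico (s m) (s (m + 1)) ∩ Set.Ioo a b)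
          (Set.Ico (s n) (s (n + 1)) ∩ Set.Ioo a b) := by
      intro m n h
      refine Set.disjoint_left.mpr fun x hx1 hx2 => ?_
      have h1 : s (m + 1) ≤ s n := hmono.monotone (by omega)
      have := hx1.1.2
      have := hx2.1.1
      linarith
    rcases lt_or_gt_of_ne hmn with h | h
    · exact key m n h
    · exact (key n m h).symm
  rw [← measure_iUnion hdisj (fun n => measurableSet_Ico.inter measurableSet_Ioo)]
  have hU : (⋃ n : ℤ, Set.Ico (s n) (s (n + 1)) ∩ Set.Ioo a b) = Set.Ioo a b := by
    ext x
    simp only [Set.mem_iUnion, Set.mem_inter_iff]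
    constructor
    · rintro ⟨n, _, h⟩; exact h
    · intro hx
      obtain ⟨n, hn⟩ := exists_idx s hmono htop hbot x
      exact ⟨n, hn, hx⟩
  rw [hU, Real.volume_Ioo]

theorem stmt7
    (s : ℤ → ℝ) (hmono : StrictMono s)
    (htop : Tendsto s atTop atTop) (hbot : Tendsto s atBot atBot)
    (N : ℝ) (hN : 1 ≤ N) :
    (∀ a b : ℝ, a < b →
      segMeasure s N (carlesonWindow a b) ≤ ENNReal.ofReal (b - a))
    ∧
    (∀ L : Set ℂ, L.Nonempty → (∀ w ∈ L, 0 < w.im) →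
      ∀ α : ℝ, 1 ≤ α →
      (∀ n : ℤ, ∀ x ∈ Set.Ico (s n) (s (n + 1)),
        α⁻¹ * Metric.infDist (x : ℂ) L ≤ s (n + 1) - s n ∧
          s (n + 1) - s n ≤ α * Metric.infDist (x : ℂ) L) →
      ∀ N₀ : ℝ, 1 ≤ N₀ → Real.sqrt 2 * (1 + α) * N₀ ≤ N →
      ∀ a b : ℝ, a < b →
        (carlesonWindow ((a + b) / 2 - N₀ * (b - a) / 2)
            ((a + b) / 2 + N₀ * (b - a) / 2) ∩ L).Nonempty →
        segMeasure s N (carlesonWindow a b) = ENNReal.ofReal (b - a)) := by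
  have hN0 : (0 : ℝ) < N := lt_of_lt_of_le one_pos hN
  constructor
  · intro a b hab
    rw [← tsum_vol s hmono htop hbot a b hab]
    unfold segMeasure
    refine Summable.tsum_le_tsum (fun n => measure_mono ?_) ENNReal.summable ENNReal.summable
    have hc : ((s (n + 1) : ℂ) - (s n : ℂ)) / (N : ℂ)
        = (((s (n + 1) - s n) / N : ℝ) : ℂ) := by push_cast; ring
    rw [hc]
    intro x hx
    obtain ⟨hx1, hx2⟩ := hx
    exact ⟨hx1, ((mem_window_iff a b x _).mp hx2).1⟩
  · intro L hL hLim α hα hd N₀ hN₀ hNN a b hab ⟨w, hw, hwL⟩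
    have hsqrt2 : (0 : ℝ) < Real.sqrt 2 := Real.sqrt_pos.mpr two_pos
    have hsq2 : Real.sqrt 2 ^ 2 = 2 := Real.sq_sqrt (by norm_num)
    set ℓ := b - a with hℓdef
    have hℓ : 0 < ℓ := by simp [hℓdef]; linarith
    obtain ⟨hwre, hwim⟩ := hw
    have hwim' : w.im < N₀ * ℓ := by
      have := hwim.2
      simp only [hℓdef] at *
      linarith
    have hwim0 : 0 < w.im := hwim.1
    rw [← tsum_vol s hmono htop hbot a b hab]
    unfold segMeasure
    congr 1
    funext n
    have hc : ((s (n + 1) : ℂ) - (s n : ℂ)) / (N : ℂ)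
        = (((s (n + 1) - s n) / N : ℝ) : ℂ) := by push_cast; ring
    rw [hc]
    congr 1
    ext x
    simp only [Set.mem_setOf_eq, Set.mem_inter_iff, mem_window_iff]
    constructor
    · rintro ⟨h1, h2, _⟩; exact ⟨h1, h2⟩
    · rintro ⟨hx1, hx2⟩
      refine ⟨hx1, hx2, ?_, ?_⟩
      · exact div_pos (by linarith [hmono (lt_add_one n)]) hN0
      · -- (s(n+1)-s n)/N < b - a
        have hxa : a < x := hx2.1
        have hxb : x < b := hx2.2
        have hre1 : (a + b) / 2 - N₀ * ℓ / 2 < w.re := hwre.1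
        have hre2 : w.re < (a + b) / 2 + N₀ * ℓ / 2 := hwre.2
        have hdist : dist (x : ℂ) w ≤ Real.sqrt 2 * (N₀ * ℓ) := by
          rw [Complex.dist_eq_re_im]
          have hxre : ((x : ℂ)).re = x := Complex.ofReal_re x
          have hxim : ((x : ℂ)).im = 0 := Complex.ofReal_im x
          rw [hxre, hxim]
          have haux : 0 ≤ (N₀ - 1) * ℓ := mul_nonneg (by linarith) hℓ.le
          have hub : x - w.re ≤ N₀ * ℓ := by nlinarith
          have hlb : w.re - x ≤ N₀ * ℓ := by nlinarith
          have h1 : (x - w.re) ^ 2 ≤ (N₀ * ℓ) ^ 2 := by nlinarith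
          have h2 : (0 - w.im) ^ 2 ≤ (N₀ * ℓ) ^ 2 := by nlinarith
          calc Real.sqrt ((x - w.re) ^ 2 + (0 - w.im) ^ 2)
              ≤ Real.sqrt (2 * (N₀ * ℓ) ^ 2) := Real.sqrt_le_sqrt (by linarith)
            _ = Real.sqrt 2 * (N₀ * ℓ) := by
                rw [Real.sqrt_mul (by norm_num), Real.sqrt_sq (by positivity)]
        have hinf : Metric.infDist (x : ℂ) L ≤ dist (x : ℂ) w :=
          Metric.infDist_le_dist_of_mem hwL
        have hle : s (n + 1) - s n ≤ α * Metric.infDist (x : ℂ) L := (hd n x hx1).2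
        have hinf0 : 0 ≤ Metric.infDist (x : ℂ) L := Metric.infDist_nonneg
        have h3 : s (n + 1) - s n ≤ α * (Real.sqrt 2 * (N₀ * ℓ)) := by
          calc s (n + 1) - s n ≤ α * Metric.infDist (x : ℂ) L := hle
            _ ≤ α * (Real.sqrt 2 * (N₀ * ℓ)) := by
                apply mul_le_mul_of_nonneg_left (le_trans hinf hdist) (by linarith)
        have h4 : α * (Real.sqrt 2 * (N₀ * ℓ)) < N * ℓ := by
          have : Real.sqrt 2 * (1 + α) * N₀ * ℓ ≤ N * ℓ :=
            mul_le_mul_of_nonneg_right hNN hℓ.le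
          nlinarith
        rw [div_lt_iff₀ hN0]
        show s (n + 1) - s n < ℓ * N
        nlinarith
end

section
/- Let p ∈ [1,∞), ε > 0, and K ≥ 1. Let (J_n)_{n∈ℤ} be pairwise disjoint measurable subsets of ℝ and F = ⋃_{n∈ℤ} J_n. Let f : ℝ → ℂ be infinitely differentiable, let d : ℝ → [0,∞) be measurable, and assume ∫_F |f(x)|^p dx < ∞ and, for every integer k ≥ 1, ∫_F ( |f^{(k)}(x)|·d(x)^k )^p dx ≤ K · (4^k k!/ε^k)^p · ∫_F |f(x)|^p dx. Call an index n bad if there exists an integer m ≥ 1 with ∫_{J_n} ( |f^{(m)}(x)|·d(x)^m )^p dx ≥ K·4^m·(4^m m!/ε^m)^p · ∫_{J_n} |f(x)|^p dx, and good otherwise. Then Σ_{n good} ∫_{J_n} |f(x)|^p dx ≥ (2/3) · ∫_F |f(x)|^p dx. -/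
open MeasureTheory Set

theorem stmt10
    (p ε K : ℝ) (hp : 1 ≤ p) (hε : 0 < ε) (hK : 1 ≤ K)
    (J : ℤ → Set ℝ) (hJmeas : ∀ n, MeasurableSet (J n))
    (hJdisj : Pairwise (Function.onFun Disjoint J))
    (f : ℝ → ℂ) (hf : ContDiff ℝ (⊤ : ℕ∞) f)
    (d : ℝ → ℝ) (hdmeas : Measurable d) (hd0 : ∀ x, 0 ≤ d x)
    (hfint : IntegrableOn (fun x : ℝ => ‖f x‖ ^ p) (⋃ n, J n))
    (hbernInt : ∀ k : ℕ, 1 ≤ k →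
      IntegrableOn (fun x : ℝ => (‖iteratedDeriv k f x‖ * d x ^ k) ^ p)
        (⋃ n, J n))
    (hbern : ∀ k : ℕ, 1 ≤ k →
      ∫ x in ⋃ n, J n, (‖iteratedDeriv k f x‖ * d x ^ k) ^ p
        ≤ K * ((4 : ℝ) ^ k * (Nat.factorial k : ℝ) / ε ^ k) ^ p
            * ∫ x in ⋃ n, J n, ‖f x‖ ^ p) :
    (2 / 3) * ∫ x in ⋃ n, J n, ‖f x‖ ^ p
      ≤ ∑' m : {n : ℤ // ¬ ∃ k : ℕ, 1 ≤ k ∧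
            K * (4 : ℝ) ^ k * ((4 : ℝ) ^ k * (Nat.factorial k : ℝ) / ε ^ k) ^ p
                * ∫ x in J n, ‖f x‖ ^ p
              ≤ ∫ x in J n, (‖iteratedDeriv k f x‖ * d x ^ k) ^ p},
          ∫ x in J m.1, ‖f x‖ ^ p := by
  classical
  set I : ℝ := ∫ x in ⋃ n, J n, ‖f x‖ ^ p with hIdef
  set g : ℤ → ℝ := fun n => ∫ x in J n, ‖f x‖ ^ p with hgdef
  set C : ℕ → ℝ := fun k => (4 : ℝ) ^ k * (Nat.factorial k : ℝ) / ε ^ k with hCdef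
  set b : ℕ → ℤ → ℝ :=
    fun k n => ∫ x in J n, (‖iteratedDeriv k f x‖ * d x ^ k) ^ p with hbdef
  set B : ℕ → ℝ :=
    fun k => ∫ x in ⋃ n, J n, (‖iteratedDeriv k f x‖ * d x ^ k) ^ p with hBdef
  set S : Set ℤ := {n : ℤ | ¬ ∃ k : ℕ, 1 ≤ k ∧
      K * (4 : ℝ) ^ k * C k ^ p * g n ≤ b k n} with hSdef
  have hgnn : ∀ n, 0 ≤ g n := fun n =>
    setIntegral_nonneg (hJmeas n) fun x _ => Real.rpow_nonneg (norm_nonneg _) p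
  have hbnn : ∀ k n, 0 ≤ b k n := fun k n =>
    setIntegral_nonneg (hJmeas n) fun x _ =>
      Real.rpow_nonneg (mul_nonneg (norm_nonneg _) (pow_nonneg (hd0 x) k)) p
  have hInn : 0 ≤ I :=
    setIntegral_nonneg (MeasurableSet.iUnion hJmeas) fun x _ =>
      Real.rpow_nonneg (norm_nonneg _) p
  have hsum : HasSum g I := hasSum_integral_iUnion hJmeas hJdisj hfint
  have hBsum : ∀ k : ℕ, 1 ≤ k → HasSum (b k) (B k) := fun k hk =>
    hasSum_integral_iUnion hJmeas hJdisj (hbernInt k hk)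
  have hKpos : (0 : ℝ) < K := lt_of_lt_of_le one_pos hK
  have hCpos : ∀ k : ℕ, 0 < C k := by
    intro k
    apply div_pos
    · positivity
    · positivity
  have hCp : ∀ k : ℕ, 0 < C k ^ p := fun k => Real.rpow_pos_of_pos (hCpos k) p
  have hDpos : ∀ k : ℕ, 0 < K * (4 : ℝ) ^ k * C k ^ p := by
    intro k
    have := hCp k
    positivity
  -- coefficient
  set a : ℕ → ℝ := fun k => if k = 0 then 0 else (K * (4 : ℝ) ^ k * C k ^ p)⁻¹ with hadef
  have hann : ∀ k, 0 ≤ a k := by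
    intro k
    rcases eq_or_ne k 0 with h | h
    · simp [hadef, h]
    · simp only [hadef, if_neg h]
      exact le_of_lt (inv_pos.mpr (hDpos k))
  -- bound for bad indices
  have hbad : ∀ n : ℤ, n ∈ Sᶜ → ∃ k : ℕ, g n ≤ a k * b k n := by
    intro n hn
    have hn' : ∃ k : ℕ, 1 ≤ k ∧ K * (4 : ℝ) ^ k * C k ^ p * g n ≤ b k n := by
      simpa [hSdef] using hn
    obtain ⟨k, hk1, hk2⟩ := hn'
    refine ⟨k, ?_⟩
    have hk0 : k ≠ 0 := by omega
    have : g n ≤ (K * (4 : ℝ) ^ k * C k ^ p)⁻¹ * b k n := by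
      rw [le_inv_mul_iff₀ (hDpos k)]
      linarith [hk2]
    simpa [hadef, hk0] using this
  -- the geometric bound function
  set t : ℕ → ℝ := fun k => if k = 0 then 0 else (1 / 4 : ℝ) ^ k * I with htdef
  have htnn : ∀ k, 0 ≤ t k := by
    intro k
    by_cases h : k = 0 <;> simp [htdef, h]
    positivity
  -- per-k bound in ENNReal
  have hterm : ∀ k : ℕ, (∑' n : ℤ, ENNReal.ofReal (a k * b k n)) ≤ ENNReal.ofReal (t k) := by
    intro k
    by_cases hk0 : k = 0
    · simp [hadef, hk0]
    · have hk1 : 1 ≤ k := Nat.one_le_iff_ne_zero.mpr hk0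
      have hbk := hBsum k hk1
      have hsummable : Summable (fun n => a k * b k n) := hbk.summable.mul_left (a k)
      have h1 : (∑' n : ℤ, ENNReal.ofReal (a k * b k n))
          = ENNReal.ofReal (∑' n : ℤ, a k * b k n) :=
        (ENNReal.ofReal_tsum_of_nonneg (fun n => mul_nonneg (hann k) (hbnn k n)) hsummable).symm
      rw [h1]
      apply ENNReal.ofReal_le_ofReal
      have h2 : (∑' n : ℤ, a k * b k n) = a k * B k := by
        rw [tsum_mul_left, hbk.tsum_eq]
      rw [h2]
      have h3 : B k ≤ K * C k ^ p * I := hbern k hk1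
      have h4 : a k * B k ≤ a k * (K * C k ^ p * I) :=
        mul_le_mul_of_nonneg_left h3 (hann k)
      have h5 : a k * (K * C k ^ p * I) = (1 / 4 : ℝ) ^ k * I := by
        have hC := (hCp k).ne'
        have h4k : ((4 : ℝ) ^ k) ≠ 0 := by positivity
        simp only [hadef, if_neg hk0]
        field_simp
        have h14 : (1 / 4 : ℝ) ^ k * 4 ^ k = 1 := by rw [← mul_pow]; norm_num
        linear_combination (-I) * h14
      rw [htdef]
      simp only [if_neg hk0]
      linarith [h4, h5]
  -- sum of the geometric bounds
  have htsum : (∑' k : ℕ, ENNReal.ofReal (t k)) = ENNReal.ofReal (I / 3) := by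
    rw [tsum_eq_zero_add' ENNReal.summable]
    have ht0 : t 0 = 0 := by simp [htdef]
    have hshift : ∀ k : ℕ, t (k + 1) = (1 / 4 : ℝ) ^ k * ((1 / 4) * I) := by
      intro k
      have hne : k + 1 ≠ 0 := Nat.succ_ne_zero k
      simp only [htdef, if_neg hne, pow_succ]
      ring
    have hsummable : Summable (fun k : ℕ => (1 / 4 : ℝ) ^ k * ((1 / 4) * I)) :=
      (summable_geometric_of_lt_one (by norm_num) (by norm_num)).mul_right _
    have : (∑' k : ℕ, ENNReal.ofReal (t (k + 1)))
        = ENNReal.ofReal (∑' k : ℕ, (1 / 4 : ℝ) ^ k * ((1 / 4) * I)) := by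
      rw [tsum_congr fun k => congrArg ENNReal.ofReal (hshift k)]
      exact (ENNReal.ofReal_tsum_of_nonneg (fun k => by positivity) hsummable).symm
    rw [ht0, this]
    have : (∑' k : ℕ, (1 / 4 : ℝ) ^ k * ((1 / 4) * I)) = I / 3 := by
      rw [tsum_mul_right, tsum_geometric_of_lt_one (by norm_num) (by norm_num)]
      norm_num
      ring
    rw [this]
    simp
  -- key bound in ENNReal
  have key : (∑' n : ↥(Sᶜ), ENNReal.ofReal (g n.1)) ≤ ENNReal.ofReal (I / 3) := by
    calc (∑' n : ↥(Sᶜ), ENNReal.ofReal (g n.1))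
        ≤ ∑' n : ↥(Sᶜ), ∑' k : ℕ, ENNReal.ofReal (a k * b k n.1) := by
          apply ENNReal.tsum_le_tsum
          intro n
          obtain ⟨k, hk⟩ := hbad n.1 n.2
          exact le_trans (ENNReal.ofReal_le_ofReal hk) (ENNReal.le_tsum k)
      _ = ∑' n : ℤ, Set.indicator (Sᶜ)
            (fun n => ∑' k : ℕ, ENNReal.ofReal (a k * b k n)) n :=
          tsum_subtype (Sᶜ) (fun n => ∑' k : ℕ, ENNReal.ofReal (a k * b k n))
      _ ≤ ∑' n : ℤ, ∑' k : ℕ, ENNReal.ofReal (a k * b k n) :=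
          ENNReal.tsum_le_tsum fun n => Set.indicator_le_self _ _ n
      _ = ∑' k : ℕ, ∑' n : ℤ, ENNReal.ofReal (a k * b k n) := ENNReal.tsum_comm
      _ ≤ ∑' k : ℕ, ENNReal.ofReal (t k) := ENNReal.tsum_le_tsum hterm
      _ = ENNReal.ofReal (I / 3) := htsum
  -- back to reals
  have hsubS : Summable (fun n : ↥S => g n.1) := hsum.summable.subtype S
  have hsubSc : Summable (fun n : ↥(Sᶜ) => g n.1) := hsum.summable.subtype Sᶜ
  have hofReal : ENNReal.ofReal (∑' n : ↥(Sᶜ), g n.1)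
      = ∑' n : ↥(Sᶜ), ENNReal.ofReal (g n.1) :=
    ENNReal.ofReal_tsum_of_nonneg (fun n => hgnn n.1) hsubSc
  have hbadle : (∑' n : ↥(Sᶜ), g n.1) ≤ I / 3 := by
    rw [← ENNReal.ofReal_le_ofReal_iff (by linarith), hofReal]
    exact key
  have hsplit : (∑' n : ↥S, g n.1) + (∑' n : ↥(Sᶜ), g n.1) = I := by
    rw [hsum.summable.tsum_subtype_add_tsum_subtype_compl S, hsum.tsum_eq]
  have hgoal : (2 / 3) * I ≤ ∑' n : ↥S, g n.1 := by linarith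
  exact hgoal
end

section
/- Let p ∈ [1,∞), ε > 0, K ≥ 1, and κ > 1. Let J ⊂ ℝ be a bounded interval with |J| > 0, let x ∈ J, let d > 0 satisfy |J| ≤ (ε/(40·8^{1/p}))·d, and let f be holomorphic on the open disc D(x, 10|J|) ⊂ ℂ. Assume that for every integer k ≥ 0, |f^{(k)}(x)|^p ≤ 2κK · 8^k · (4^k k!/(ε^k d^k))^p · (1/|J|) ∫_J |f(t)|^p dt. Then for every y ∈ ℂ with |x − y| < 10|J|, |f(y)| ≤ (2κK)^{1/p} / (1 − |x−y|/(10|J|)) · sup_{t ∈ J} |f(t)|. -/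
open MeasureTheory Set

theorem stmt12
    (p ε K κ : ℝ) (hp : 1 ≤ p) (hε : 0 < ε) (hK : 1 ≤ K) (hκ : 1 < κ)
    (A B : ℝ) (hAB : A < B)
    (x : ℝ) (hx : x ∈ Set.Icc A B)
    (d : ℝ) (hd : 0 < d)
    (hJd : B - A ≤ ε / (40 * (8 : ℝ) ^ (1 / p)) * d)
    (f : ℂ → ℂ)
    (hf : DifferentiableOn ℂ f (Metric.ball (x : ℂ) (10 * (B - A))))
    (hgood : ∀ k : ℕ,
      ‖iteratedDeriv k f (x : ℂ)‖ ^ p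
        ≤ 2 * κ * K * (8 : ℝ) ^ k
            * ((4 : ℝ) ^ k * (Nat.factorial k : ℝ) / (ε ^ k * d ^ k)) ^ p
            * ((B - A)⁻¹ * ∫ t in Set.Icc A B, ‖f t‖ ^ p)) :
    ∀ y : ℂ, ‖(x : ℂ) - y‖ < 10 * (B - A) →
      ‖f y‖
        ≤ (2 * κ * K) ^ (1 / p) / (1 - ‖(x : ℂ) - y‖ / (10 * (B - A)))
            * sSup ((fun t : ℝ => ‖f t‖) '' Set.Icc A B) := by
  intro y hy
  have hBA : (0:ℝ) < B - A := sub_pos.mpr hAB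
  have hp0 : (0:ℝ) < p := lt_of_lt_of_le one_pos hp
  have hpne : p ≠ 0 := hp0.ne'
  have h8 : (0:ℝ) < (8:ℝ) ^ (1/p) := Real.rpow_pos_of_pos (by norm_num) _
  have h2κK : (0:ℝ) < 2 * κ * K := by positivity
  -- the map t ↦ (t : ℂ) sends Icc A B into the ball
  have hmaps : ∀ t ∈ Set.Icc A B, (t : ℂ) ∈ Metric.ball (x : ℂ) (10 * (B - A)) := by
    intro t ht
    rw [Metric.mem_ball, Complex.dist_eq]
    have : ((t : ℂ) - x) = ((t - x : ℝ) : ℂ) := by push_cast; ring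
    rw [this, Complex.norm_real, Real.norm_eq_abs]
    have h1 : |t - x| ≤ B - A := by
      rw [abs_le]
      constructor <;> [linarith [ht.1, hx.2]; linarith [ht.2, hx.1]]
    linarith
  -- continuity of |f| on Icc
  have hcont : ContinuousOn (fun t : ℝ => ‖f t‖) (Set.Icc A B) := by
    apply continuous_norm.comp_continuousOn
    exact hf.continuousOn.comp Complex.continuous_ofReal.continuousOn hmaps
  set M := sSup ((fun t : ℝ => ‖f t‖) '' Set.Icc A B) with hM
  have hbdd : BddAbove ((fun t : ℝ => ‖f t‖) '' Set.Icc A B) :=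
    (isCompact_Icc.image_of_continuousOn hcont).bddAbove
  have hMb : ∀ t ∈ Set.Icc A B, ‖f t‖ ≤ M := fun t ht =>
    le_csSup hbdd ⟨t, ht, rfl⟩
  have hM0 : 0 ≤ M := le_trans (norm_nonneg _) (hMb x hx)
  -- integral bound
  have hint : IntegrableOn (fun t : ℝ => ‖f t‖ ^ p) (Set.Icc A B) := by
    apply ContinuousOn.integrableOn_Icc
    exact hcont.rpow_const (fun t ht => Or.inr hp0.le)
  have hI : (B - A)⁻¹ * (∫ t in Set.Icc A B, ‖f t‖ ^ p) ≤ M ^ p := by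
    have h1 : (∫ t in Set.Icc A B, ‖f t‖ ^ p)
        ≤ ∫ _ in Set.Icc A B, M ^ p := by
      apply setIntegral_mono_on hint (integrableOn_const (by
        rw [Real.volume_Icc]; exact ENNReal.ofReal_ne_top)) measurableSet_Icc
      intro t ht
      exact Real.rpow_le_rpow (norm_nonneg _) (hMb t ht) hp0.le
    have h2 : (∫ _ in Set.Icc A B, M ^ p) = (B - A) * M ^ p := by
      rw [setIntegral_const, Real.volume_real_Icc_of_le hAB.le, smul_eq_mul]
    calc (B - A)⁻¹ * (∫ t in Set.Icc A B, ‖f t‖ ^ p)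
        ≤ (B - A)⁻¹ * ((B - A) * M ^ p) := by
          apply mul_le_mul_of_nonneg_left _ (inv_nonneg.mpr hBA.le)
          rw [← h2]; exact h1
      _ = M ^ p := by field_simp
  -- derivative bound
  have hderiv : ∀ k : ℕ, ‖iteratedDeriv k f (x : ℂ)‖
      ≤ (2 * κ * K) ^ (1/p) * ((8:ℝ) ^ (1/p)) ^ k
          * ((4:ℝ) ^ k * (Nat.factorial k : ℝ) / (ε ^ k * d ^ k)) * M := by
    intro k
    set a := ‖iteratedDeriv k f (x : ℂ)‖ with ha
    set c := (4:ℝ) ^ k * (Nat.factorial k : ℝ) / (ε ^ k * d ^ k) with hc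
    have hc0 : 0 < c := by positivity
    have hap : a ^ p ≤ 2 * κ * K * (8:ℝ) ^ k * c ^ p * M ^ p := by
      calc a ^ p ≤ 2 * κ * K * (8:ℝ) ^ k * c ^ p
            * ((B - A)⁻¹ * ∫ t in Set.Icc A B, ‖f t‖ ^ p) := hgood k
        _ ≤ 2 * κ * K * (8:ℝ) ^ k * c ^ p * M ^ p := by
            apply mul_le_mul_of_nonneg_left hI
            positivity
    have hpinv : p * (1/p) = 1 := by field_simp
    have key := Real.rpow_le_rpow (by positivity) hap (by positivity : (0:ℝ) ≤ 1/p)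
    rwa [← Real.rpow_mul (norm_nonneg _), hpinv, Real.rpow_one,
      Real.mul_rpow (by positivity) (by positivity),
      Real.mul_rpow (by positivity) (by positivity),
      Real.mul_rpow (by positivity) (by positivity),
      ← Real.rpow_mul hc0.le, hpinv, Real.rpow_one,
      ← Real.rpow_mul hM0, hpinv, Real.rpow_one,
      show ((8:ℝ) ^ k) ^ (1/p) = ((8:ℝ) ^ (1/p)) ^ k by
        rw [← Real.rpow_natCast (8:ℝ) k, ← Real.rpow_natCast ((8:ℝ)^(1/p)) k,
          ← Real.rpow_mul (by norm_num : (0:ℝ) ≤ 8),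
          ← Real.rpow_mul (by norm_num : (0:ℝ) ≤ 8), mul_comm]] at key
  -- geometric ratio
  set r := ‖(x : ℂ) - y‖ / (10 * (B - A)) with hr
  have hr0 : 0 ≤ r := by positivity
  have hr1 : r < 1 := (div_lt_one (by linarith)).mpr hy
  -- key quantitative inequality
  have hquant : (8:ℝ) ^ (1/p) * 4 * ‖(x : ℂ) - y‖ / (ε * d)
      ≤ r := by
    have hεd : 40 * (8:ℝ) ^ (1/p) * (B - A) ≤ ε * d := by
      have h40 : (0:ℝ) < 40 * (8:ℝ) ^ (1/p) := by positivity
      rw [div_mul_eq_mul_div, le_div_iff₀ h40] at hJd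
      linarith
    rw [hr, div_le_div_iff₀ (by positivity) (by positivity)]
    have habs : 0 ≤ ‖(x : ℂ) - y‖ := norm_nonneg _
    nlinarith [mul_le_mul_of_nonneg_left hεd habs]
  -- term bound
  have hterm : ∀ k : ℕ,
      ‖((Nat.factorial k : ℂ))⁻¹ • (y - (x:ℂ)) ^ k • iteratedDeriv k f (x:ℂ)‖
        ≤ (2 * κ * K) ^ (1/p) * M * r ^ k := by
    intro k
    have hfac : (0:ℝ) < (Nat.factorial k : ℝ) := by positivity
    rw [norm_smul, norm_smul, norm_inv, norm_pow]
    have h1 : ‖((Nat.factorial k : ℂ))‖ = (Nat.factorial k : ℝ) := by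
      simp
    rw [h1]
    have h2 : ‖y - (x:ℂ)‖ = ‖(x:ℂ) - y‖ := by
      exact norm_sub_rev y (x:ℂ)
    rw [h2, ← mul_assoc]
    have h3 := hderiv k
    set a := ‖iteratedDeriv k f (x : ℂ)‖ with ha
    have ha0 : 0 ≤ a := norm_nonneg _
    have hstep : (Nat.factorial k : ℝ)⁻¹ * ‖(x:ℂ) - y‖ ^ k * a
        ≤ (2 * κ * K) ^ (1/p) * M *
          ((8:ℝ) ^ (1/p) * 4 * ‖(x:ℂ) - y‖ / (ε * d)) ^ k := by
      have habs : 0 ≤ ‖(x:ℂ) - y‖ := norm_nonneg _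
      have := mul_le_mul_of_nonneg_left h3
        (by positivity : (0:ℝ) ≤ (Nat.factorial k : ℝ)⁻¹ * ‖(x:ℂ) - y‖ ^ k)
      calc (Nat.factorial k : ℝ)⁻¹ * ‖(x:ℂ) - y‖ ^ k * a
          ≤ (Nat.factorial k : ℝ)⁻¹ * ‖(x:ℂ) - y‖ ^ k *
            ((2 * κ * K) ^ (1/p) * ((8:ℝ) ^ (1/p)) ^ k
              * ((4:ℝ) ^ k * (Nat.factorial k : ℝ) / (ε ^ k * d ^ k)) * M) := by
            rw [mul_assoc] at this ⊢; exact this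
        _ = (2 * κ * K) ^ (1/p) * M *
            ((8:ℝ) ^ (1/p) * 4 * ‖(x:ℂ) - y‖ / (ε * d)) ^ k := by
            field_simp
            rw [div_pow, mul_pow]; field_simp; ring
    refine hstep.trans ?_
    apply mul_le_mul_of_nonneg_left _ (by positivity)
    exact pow_le_pow_left₀ (by positivity) hquant k
  -- Taylor series
  have hsum : HasSum (fun k : ℕ =>
      ((Nat.factorial k : ℂ))⁻¹ • (y - (x:ℂ)) ^ k • iteratedDeriv k f (x:ℂ)) (f y) := by
    apply Complex.hasSum_taylorSeries_on_ball hf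
    rw [Metric.mem_ball, Complex.dist_eq, norm_sub_rev]
    exact hy
  have hgeo : HasSum (fun k : ℕ => (2 * κ * K) ^ (1/p) * M * r ^ k)
      ((2 * κ * K) ^ (1/p) * M * (1 - r)⁻¹) :=
    (hasSum_geometric_of_lt_one hr0 hr1).mul_left _
  have hfinal : ‖f y‖ ≤ (2 * κ * K) ^ (1/p) * M * (1 - r)⁻¹ := by
    rw [← hsum.tsum_eq]
    exact tsum_of_norm_bounded hgeo hterm
  calc ‖f y‖ = ‖f y‖ := rfl
    _ ≤ (2 * κ * K) ^ (1/p) * M * (1 - r)⁻¹ := hfinal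
    _ = (2 * κ * K) ^ (1/p) / (1 - r) * M := by ring
end

section
/- Let p ∈ [1,∞), ε ∈ (0,1), K ≥ 1, and κ > 1. Let J ⊂ ℝ be a compact interval with |J| > 0, let d : J → (0,∞) be continuous with |J| ≤ (ε/(40·8^{1/p}))·d(x) for every x ∈ J, and let f be holomorphic on the open set {z ∈ ℂ : dist(z, J) < 10|J|}. Assume 0 < ∫_J |f(x)|^p dx < ∞ and, for every integer m ≥ 1, ∫_J ( |f^{(m)}(x)|·d(x)^m )^p dx ≤ K·4^m·(4^m m!/ε^m)^p · ∫_J |f(x)|^p dx. Then sup { |f(z)| : z ∈ ℂ, dist(z, J) ≤ 4|J| } ≤ 2·(2κK)^{1/p} · sup_{x ∈ J} |f(x)|. -/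
open MeasureTheory Set

theorem stmt13
    (p ε K κ : ℝ) (hp : 1 ≤ p) (hε : ε ∈ Set.Ioo (0 : ℝ) 1) (hK : 1 ≤ K) (hκ : 1 < κ)
    (A B : ℝ) (hAB : A < B)
    (d : ℝ → ℝ) (hdcont : ContinuousOn d (Set.Icc A B))
    (hd0 : ∀ x ∈ Set.Icc A B, 0 < d x)
    (hsmall : ∀ x ∈ Set.Icc A B, B - A ≤ ε / (40 * (8 : ℝ) ^ (1 / p)) * d x)
    (f : ℂ → ℂ)
    (hf : DifferentiableOn ℂ f
      {z : ℂ | Metric.infDist z ((fun t : ℝ => (t : ℂ)) '' Set.Icc A B) < 10 * (B - A)})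
    (hfint : IntegrableOn (fun x : ℝ => ‖f x‖ ^ p) (Set.Icc A B))
    (hfpos : 0 < ∫ x in Set.Icc A B, ‖f x‖ ^ p)
    (hbernInt : ∀ m : ℕ, 1 ≤ m →
      IntegrableOn (fun x : ℝ => (‖iteratedDeriv m f (x : ℂ)‖ * d x ^ m) ^ p)
        (Set.Icc A B))
    (hbern : ∀ m : ℕ, 1 ≤ m →
      ∫ x in Set.Icc A B, (‖iteratedDeriv m f (x : ℂ)‖ * d x ^ m) ^ p
        ≤ K * (4 : ℝ) ^ m * ((4 : ℝ) ^ m * (Nat.factorial m : ℝ) / ε ^ m) ^ p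
            * ∫ x in Set.Icc A B, ‖f x‖ ^ p) :
    sSup ((fun z : ℂ => ‖f z‖) ''
        {z : ℂ | Metric.infDist z ((fun t : ℝ => (t : ℂ)) '' Set.Icc A B) ≤ 4 * (B - A)})
      ≤ 2 * (2 * κ * K) ^ (1 / p)
          * sSup ((fun t : ℝ => ‖f t‖) '' Set.Icc A B) := by
  obtain ⟨hε0, hε1⟩ := hε
  have hJ : 0 < B - A := sub_pos.2 hAB
  have hp0 : 0 < p := lt_of_lt_of_le one_pos hp
  have hp0' : p ≠ 0 := hp0.ne'
  have hK0 : 0 < K := lt_of_lt_of_le one_pos hK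
  have hκ0 : 0 < κ := lt_trans one_pos hκ
  set s8 : ℝ := (8 : ℝ) ^ (1 / p) with hs8def
  have hs8 : 0 < s8 := Real.rpow_pos_of_pos (by norm_num) _
  set J' : Set ℂ := (fun t : ℝ => (t : ℂ)) '' Set.Icc A B with hJ'def
  have hAJ : A ∈ Set.Icc A B := ⟨le_refl A, hAB.le⟩
  have hJ'ne : J'.Nonempty := ⟨(A : ℂ), A, hAJ, rfl⟩
  have hJ'cpt : IsCompact J' := isCompact_Icc.image Complex.continuous_ofReal
  have hmem : ∀ x ∈ Set.Icc A B,
      ((x : ℂ)) ∈ {z : ℂ | Metric.infDist z J' < 10 * (B - A)} := by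
    intro x hx
    have : Metric.infDist ((x : ℂ)) J' = 0 :=
      Metric.infDist_zero_of_mem ⟨x, hx, rfl⟩
    simp only [Set.mem_setOf_eq, this]
    linarith
  have hfc : ContinuousOn (fun t : ℝ => ‖f t‖) (Set.Icc A B) := by
    apply continuous_norm.comp_continuousOn
    exact hf.continuousOn.comp Complex.continuous_ofReal.continuousOn hmem
  set M := sSup ((fun t : ℝ => ‖f t‖) '' Set.Icc A B) with hMdef
  have hMbdd : BddAbove ((fun t : ℝ => ‖f t‖) '' Set.Icc A B) :=
    (isCompact_Icc.image_of_continuousOn hfc).bddAbove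
  have hMub : ∀ x ∈ Set.Icc A B, ‖f x‖ ≤ M :=
    fun x hx => le_csSup hMbdd ⟨x, hx, rfl⟩
  have hM0 : 0 ≤ M := le_trans (norm_nonneg _) (hMub A hAJ)
  set I0 := ∫ x in Set.Icc A B, ‖f x‖ ^ p with hI0def
  have hI0M : I0 / (B - A) ≤ M ^ p := by
    have h1 : I0 ≤ ∫ _x in Set.Icc A B, M ^ p := by
      apply setIntegral_mono_on hfint
        (integrableOn_const (by rw [Real.volume_Icc]; exact ENNReal.ofReal_ne_top))
        measurableSet_Icc
      intro x hx
      exact Real.rpow_le_rpow (norm_nonneg _) (hMub x hx) hp0.le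
    rw [setIntegral_const, Real.volume_real_Icc_of_le hAB.le, smul_eq_mul] at h1
    rw [div_le_iff₀ hJ]
    linarith
  -- the exceptional sets and the good point
  set g : ℕ → ℝ → ℝ :=
    fun m x => (‖iteratedDeriv m f (x : ℂ)‖ * d x ^ m) ^ p with hgdef
  set T : ℕ → ℝ := fun m =>
    2 * κ * K * 8 ^ m * ((4 : ℝ) ^ m * (Nat.factorial m : ℝ) / ε ^ m) ^ p * (I0 / (B - A))
    with hTdef
  have hfact : ∀ m : ℕ, (0 : ℝ) < (Nat.factorial m : ℝ) := by
    intro m; exact_mod_cast Nat.factorial_pos m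
  have hQpos : ∀ m : ℕ, (0 : ℝ) < ((4 : ℝ) ^ m * (Nat.factorial m : ℝ) / ε ^ m) ^ p := by
    intro m
    apply Real.rpow_pos_of_pos
    have := hfact m
    positivity
  have hTpos : ∀ m : ℕ, 0 < T m := by
    intro m
    have h1 := hQpos m
    have : 0 < I0 / (B - A) := div_pos hfpos hJ
    positivity
  have hcheb : ∀ m : ℕ, 1 ≤ m →
      volume {x | x ∈ Set.Icc A B ∧ T m < g m x}
        ≤ ENNReal.ofReal ((B - A) / (2 * κ) * (1 / 2) ^ m) := by
    intro m hm
    set μ := volume.restrict (Set.Icc A B) with hμdef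
    have hgnn : 0 ≤ᵐ[μ] g m :=
      ae_restrict_of_forall_mem measurableSet_Icc (fun x hx => Real.rpow_nonneg
        (mul_nonneg (norm_nonneg _) (pow_nonneg (hd0 x hx).le m)) p)
    have hcheb1 := mul_meas_ge_le_integral_of_nonneg hgnn (hbernInt m hm) (T m)
    have hkey : K * (4 : ℝ) ^ m * ((4 : ℝ) ^ m * (Nat.factorial m : ℝ) / ε ^ m) ^ p * I0
        = T m * ((B - A) / (2 * κ * 2 ^ m)) := by
      have h8 : (8 : ℝ) ^ m = 2 ^ m * 4 ^ m := by
        rw [← mul_pow]; norm_num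
      rw [hTdef]
      field_simp [h8]
      ring_nf
      linear_combination -h8
    have hcheb2 : T m * (μ {x | T m ≤ g m x}).toReal
        ≤ T m * ((B - A) / (2 * κ * 2 ^ m)) := by
      calc T m * (μ {x | T m ≤ g m x}).toReal ≤ ∫ x, g m x ∂μ := hcheb1
        _ ≤ K * (4 : ℝ) ^ m * ((4 : ℝ) ^ m * (Nat.factorial m : ℝ) / ε ^ m) ^ p * I0 :=
            hbern m hm
        _ = _ := hkey
    have hcheb3 : (μ {x | T m ≤ g m x}).toReal ≤ (B - A) / (2 * κ * 2 ^ m) :=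
      le_of_mul_le_mul_left hcheb2 (hTpos m)
    have hμfin : μ {x | T m ≤ g m x} ≠ ⊤ := by
      apply ne_of_lt
      calc μ {x | T m ≤ g m x} ≤ μ Set.univ := measure_mono (Set.subset_univ _)
        _ = volume (Set.Icc A B) := by rw [hμdef, Measure.restrict_apply_univ]
        _ < ⊤ := by rw [Real.volume_Icc]; exact ENNReal.ofReal_lt_top
    have hc' : (B - A) / (2 * κ * 2 ^ m) = (B - A) / (2 * κ) * (1 / 2) ^ m := by
      rw [div_pow, one_pow]
      field_simp
    have hsub : {x | x ∈ Set.Icc A B ∧ T m < g m x}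
        ⊆ {x | T m ≤ g m x} ∩ Set.Icc A B :=
      fun x hx => ⟨hx.2.le, hx.1⟩
    calc volume {x | x ∈ Set.Icc A B ∧ T m < g m x}
        ≤ volume ({x | T m ≤ g m x} ∩ Set.Icc A B) := measure_mono hsub
      _ = μ {x | T m ≤ g m x} := (Measure.restrict_apply' measurableSet_Icc).symm
      _ ≤ ENNReal.ofReal ((B - A) / (2 * κ) * (1 / 2) ^ m) := by
          rw [ENNReal.le_ofReal_iff_toReal_le hμfin (by positivity)]
          rw [← hc']
          exact hcheb3
  obtain ⟨x₀, hx₀J, hx₀⟩ : ∃ x₀ ∈ Set.Icc A B, ∀ m : ℕ, 1 ≤ m → g m x₀ ≤ T m := by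
    by_contra hcon
    push_neg at hcon
    set c : ℝ := (B - A) / (2 * κ) with hcdef
    have hc0 : 0 ≤ c := by positivity
    have hsub : Set.Icc A B ⊆ ⋃ m : ℕ, {x | x ∈ Set.Icc A B ∧ T (m + 1) < g (m + 1) x} := by
      intro x hx
      obtain ⟨m, hm1, hmx⟩ := hcon x hx
      refine Set.mem_iUnion.2 ⟨m - 1, hx, ?_⟩
      rwa [Nat.sub_add_cancel hm1]
    have hfun : (fun m : ℕ => c * (1 / 2 : ℝ) ^ (m + 1)) = fun m : ℕ => c / 2 * (1 / 2) ^ m := by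
      funext m; ring
    have hsummable : Summable (fun m : ℕ => c * (1 / 2 : ℝ) ^ (m + 1)) := by
      rw [hfun]
      exact (summable_geometric_of_lt_one (by norm_num) (by norm_num)).mul_left _
    have htsum : ∑' m : ℕ, c * (1 / 2 : ℝ) ^ (m + 1) = c := by
      rw [hfun, tsum_mul_left, tsum_geometric_of_lt_one (by norm_num) (by norm_num)]
      norm_num
    have hbig : ENNReal.ofReal (B - A) ≤ ENNReal.ofReal c := by
      calc ENNReal.ofReal (B - A) = volume (Set.Icc A B) := (Real.volume_Icc).symm
        _ ≤ volume (⋃ m : ℕ, {x | x ∈ Set.Icc A B ∧ T (m + 1) < g (m + 1) x}) :=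
            measure_mono hsub
        _ ≤ ∑' m : ℕ, volume {x | x ∈ Set.Icc A B ∧ T (m + 1) < g (m + 1) x} :=
            measure_iUnion_le _
        _ ≤ ∑' m : ℕ, ENNReal.ofReal (c * (1 / 2) ^ (m + 1)) :=
            ENNReal.tsum_le_tsum (fun m => hcheb (m + 1) (Nat.le_add_left 1 m))
        _ = ENNReal.ofReal (∑' m : ℕ, c * (1 / 2) ^ (m + 1)) :=
            (ENNReal.ofReal_tsum_of_nonneg (fun m => by positivity) hsummable).symm
        _ = ENNReal.ofReal c := by rw [htsum]
    have : B - A ≤ c := by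
      rwa [ENNReal.ofReal_le_ofReal_iff hc0] at hbig
    have : c < B - A := by
      rw [hcdef]
      exact div_lt_self hJ (by linarith)
    linarith
  -- derivative bounds at the good point
  have hd0' : 0 < d x₀ := hd0 x₀ hx₀J
  have h8m : ∀ m : ℕ, ((8 : ℝ) ^ m) ^ (1 / p) = s8 ^ m := by
    intro m
    rw [hs8def, ← Real.rpow_natCast (8 : ℝ) m, ← Real.rpow_mul (by norm_num),
      mul_comm, Real.rpow_mul (by norm_num), Real.rpow_natCast]
  have hDer : ∀ m : ℕ, 1 ≤ m →
      ‖iteratedDeriv m f (x₀ : ℂ)‖ * d x₀ ^ m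
        ≤ (2 * κ * K) ^ (1 / p) * s8 ^ m
            * ((4 : ℝ) ^ m * (Nat.factorial m : ℝ) / ε ^ m) * M := by
    intro m hm
    set a := ‖iteratedDeriv m f (x₀ : ℂ)‖ * d x₀ ^ m with hadef
    have ha0 : 0 ≤ a := mul_nonneg (norm_nonneg _) (pow_nonneg hd0'.le m)
    set b := (4 : ℝ) ^ m * (Nat.factorial m : ℝ) / ε ^ m with hbdef
    have hb0 : 0 ≤ b := by
      have := hfact m; rw [hbdef]; positivity
    have h1 : a ^ p ≤ (2 * κ * K * 8 ^ m) * (b * M) ^ p := by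
      have h2 : g m x₀ ≤ T m := hx₀ m hm
      have h3 : T m ≤ 2 * κ * K * 8 ^ m * b ^ p * M ^ p := by
        rw [hTdef]
        have h4 : (0 : ℝ) ≤ 2 * κ * K * 8 ^ m * b ^ p := by
          have := hQpos m; rw [hbdef]; positivity
        calc 2 * κ * K * 8 ^ m * b ^ p * (I0 / (B - A))
            ≤ 2 * κ * K * 8 ^ m * b ^ p * M ^ p :=
              mul_le_mul_of_nonneg_left hI0M h4
          _ = _ := rfl
      calc a ^ p ≤ 2 * κ * K * 8 ^ m * b ^ p * M ^ p := le_trans h2 h3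
        _ = (2 * κ * K * 8 ^ m) * (b * M) ^ p := by
            rw [Real.mul_rpow hb0 hM0]; ring
    have h5 := Real.rpow_le_rpow (Real.rpow_nonneg ha0 p) h1 (by positivity : (0:ℝ) ≤ 1 / p)
    rw [one_div, Real.rpow_rpow_inv ha0 hp0'] at h5
    have hbM0 : 0 ≤ b * M := mul_nonneg hb0 hM0
    have hcK0 : (0 : ℝ) ≤ 2 * κ * K := by positivity
    rw [← one_div, Real.mul_rpow (by positivity) (Real.rpow_nonneg hbM0 p),
      Real.mul_rpow hcK0 (by positivity : (0:ℝ) ≤ (8:ℝ)^m), h8m m,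
      one_div, Real.rpow_rpow_inv hbM0 hp0'] at h5
    calc a ≤ (2 * κ * K) ^ (1 / p) * s8 ^ m * (b * M) := by
          rw [one_div]; linarith [h5]
      _ = (2 * κ * K) ^ (1 / p) * s8 ^ m * b * M := by ring
  -- pointwise bound on the big set
  set C : ℝ := (2 * κ * K) ^ (1 / p) * M with hCdef
  have hone : (1 : ℝ) ≤ (2 * κ * K) ^ (1 / p) := by
    calc (1 : ℝ) = (1 : ℝ) ^ (1 / p) := (Real.one_rpow _).symm
      _ ≤ (2 * κ * K) ^ (1 / p) :=
          Real.rpow_le_rpow (by norm_num) (by nlinarith) (by positivity)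
  have hMC : M ≤ C := by
    rw [hCdef]
    nlinarith
  have hC0 : 0 ≤ C := le_trans hM0 hMC
  have key : ∀ z : ℂ, Metric.infDist z J' ≤ 4 * (B - A) →
      ‖f z‖ ≤ 2 * (2 * κ * K) ^ (1 / p) * M := by
    intro z hz
    obtain ⟨w, hwJ', hwd⟩ := hJ'cpt.exists_infDist_eq_dist hJ'ne z
    obtain ⟨x, hxJ, rfl⟩ := hwJ'
    have hdist : dist z ((x₀ : ℝ) : ℂ) ≤ 5 * (B - A) := by
      have h1 : dist z ((x : ℝ) : ℂ) ≤ 4 * (B - A) := by rw [← hwd]; exact hz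
      have h2 : dist ((x : ℝ) : ℂ) ((x₀ : ℝ) : ℂ) ≤ B - A := by
        rw [Complex.dist_eq, ← Complex.ofReal_sub, Complex.norm_real, Real.norm_eq_abs]
        rw [abs_le]
        constructor <;> [linarith [hxJ.1, hxJ.2, hx₀J.1, hx₀J.2];
          linarith [hxJ.1, hxJ.2, hx₀J.1, hx₀J.2]]
      calc dist z ((x₀ : ℝ) : ℂ) ≤ dist z ((x : ℝ) : ℂ) + dist ((x : ℝ) : ℂ) ((x₀ : ℝ) : ℂ) :=
            dist_triangle _ _ _
        _ ≤ 5 * (B - A) := by linarith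
    have hball : Metric.ball ((x₀ : ℝ) : ℂ) (6 * (B - A))
        ⊆ {z : ℂ | Metric.infDist z J' < 10 * (B - A)} := by
      intro w hw
      have h1 : Metric.infDist w J' ≤ dist w ((x₀ : ℝ) : ℂ) :=
        Metric.infDist_le_dist_of_mem ⟨x₀, hx₀J, rfl⟩
      have h2 : dist w ((x₀ : ℝ) : ℂ) < 6 * (B - A) := Metric.mem_ball.1 hw
      simp only [Set.mem_setOf_eq]
      linarith
    have hzball : z ∈ Metric.ball ((x₀ : ℝ) : ℂ) (6 * (B - A)) :=
      Metric.mem_ball.2 (lt_of_le_of_lt hdist (by linarith))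
    have hsum := Complex.hasSum_taylorSeries_on_ball (hf.mono hball) hzball
    set u : ℕ → ℝ := fun m =>
      ‖((Nat.factorial m : ℂ))⁻¹ • (z - ((x₀ : ℝ) : ℂ)) ^ m • iteratedDeriv m f ((x₀ : ℝ) : ℂ)‖
      with hudef
    have hu : ∀ m : ℕ, u m = ((Nat.factorial m : ℝ))⁻¹
        * (dist z ((x₀ : ℝ) : ℂ) ^ m * ‖iteratedDeriv m f ((x₀ : ℝ) : ℂ)‖) := by
      intro m
      rw [hudef]
      simp only [norm_smul, norm_inv, norm_pow, Complex.norm_natCast,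
        Complex.dist_eq, Nat.abs_cast]
    have hzx : dist z ((x₀ : ℝ) : ℂ) ≤ ε * d x₀ / (8 * s8) := by
      have h1 := hsmall x₀ hx₀J
      have h2 : 5 * (B - A) ≤ 5 * (ε / (40 * s8) * d x₀) := by linarith
      have h3 : 5 * (ε / (40 * s8) * d x₀) = ε * d x₀ / (8 * s8) := by
        field_simp
        ring
      linarith
    have hu0 : u 0 ≤ M := by
      rw [hu 0]
      simp only [Nat.factorial_zero, Nat.cast_one, inv_one, pow_zero, one_mul, iteratedDeriv_zero]
      exact hMub x₀ hx₀J
    have hum : ∀ m : ℕ, 1 ≤ m → u m ≤ C * (1 / 2) ^ m := by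
      intro m hm
      rw [hu m]
      have hd1 := hDer m hm
      have hAm : ‖iteratedDeriv m f ((x₀ : ℝ) : ℂ)‖
          ≤ (2 * κ * K) ^ (1 / p) * s8 ^ m
              * ((4 : ℝ) ^ m * (Nat.factorial m : ℝ) / ε ^ m) * M / d x₀ ^ m := by
        rw [le_div_iff₀ (by positivity)]
        linarith [hd1]
      have hdd : dist z ((x₀ : ℝ) : ℂ) ^ m ≤ (ε * d x₀ / (8 * s8)) ^ m :=
        pow_le_pow_left₀ dist_nonneg hzx m
      have hstep : ((Nat.factorial m : ℝ))⁻¹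
          * (dist z ((x₀ : ℝ) : ℂ) ^ m * ‖iteratedDeriv m f ((x₀ : ℝ) : ℂ)‖)
          ≤ ((Nat.factorial m : ℝ))⁻¹ * ((ε * d x₀ / (8 * s8)) ^ m
              * ((2 * κ * K) ^ (1 / p) * s8 ^ m
                  * ((4 : ℝ) ^ m * (Nat.factorial m : ℝ) / ε ^ m) * M / d x₀ ^ m)) := by
        apply mul_le_mul_of_nonneg_left _ (by positivity)
        apply mul_le_mul hdd hAm (norm_nonneg _) (by positivity)
      have heq : ((Nat.factorial m : ℝ))⁻¹ * ((ε * d x₀ / (8 * s8)) ^ m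
              * ((2 * κ * K) ^ (1 / p) * s8 ^ m
                  * ((4 : ℝ) ^ m * (Nat.factorial m : ℝ) / ε ^ m) * M / d x₀ ^ m))
          = C * (1 / 2) ^ m := by
        have hfm := hfact m
        have h8 : (8 : ℝ) ^ m = 2 ^ m * 4 ^ m := by rw [← mul_pow]; norm_num
        rw [hCdef, div_pow, mul_pow, mul_pow, div_pow, one_pow]
        field_simp [h8]
        ring_nf
        linear_combination -M * h8
      linarith [hstep, heq ▸ hstep]
    have hub : ∀ m : ℕ, u m ≤ C * (1 / 2) ^ m := by
      intro m
      rcases Nat.eq_zero_or_pos m with rfl | hm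
      · simpa using le_trans hu0 hMC
      · exact hum m hm
    have husum : Summable u := by
      apply Summable.of_nonneg_of_le (fun m => norm_nonneg _) hub
      exact (summable_geometric_of_lt_one (by norm_num) (by norm_num)).mul_left _
    have hnorm : ‖f z‖ ≤ ∑' m, u m := by
      rw [← hsum.tsum_eq]
      exact norm_tsum_le_tsum_norm husum
    have htail : ∑' m : ℕ, u (m + 1) ≤ C := by
      have h1 : ∑' m : ℕ, u (m + 1) ≤ ∑' m : ℕ, C * (1 / 2 : ℝ) ^ (m + 1) := by
        apply Summable.tsum_le_tsum (fun m => hum (m + 1) (Nat.le_add_left 1 m))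
          ((summable_nat_add_iff 1).2 husum)
        have : (fun m : ℕ => C * (1 / 2 : ℝ) ^ (m + 1)) = fun m : ℕ => C / 2 * (1 / 2) ^ m := by
          funext m; ring
        rw [this]
        exact (summable_geometric_of_lt_one (by norm_num) (by norm_num)).mul_left _
      have h2 : ∑' m : ℕ, C * (1 / 2 : ℝ) ^ (m + 1) = C := by
        have : (fun m : ℕ => C * (1 / 2 : ℝ) ^ (m + 1)) = fun m : ℕ => C / 2 * (1 / 2) ^ m := by
          funext m; ring
        rw [this, tsum_mul_left, tsum_geometric_of_lt_one (by norm_num) (by norm_num)]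
        norm_num
      linarith
    have hsplit : ∑' m, u m = u 0 + ∑' m : ℕ, u (m + 1) := Summable.tsum_eq_zero_add husum
    have : ‖f z‖ ≤ M + C := by
      rw [hsplit] at hnorm
      linarith
    rw [hCdef] at this
    nlinarith
  apply Real.sSup_le
  · rintro y ⟨z, hz, rfl⟩
    exact key z hz
  · exact mul_nonneg (by positivity) hM0
end

section
/- Let p ∈ (1,∞) and α ≥ 1. There exists a constant C > 0, depending only on p and α, with the following property: for every integer a ≥ 1, every δ > 0, every bounded interval I ⊂ ℝ of length L > 0 and center t₀, every measurable set Γ ⊂ ℝ such that |Γ ∩ (I^{ℓ+1} ∖ I^{ℓ})| ≤ δL for every integer ℓ with 0 ≤ ℓ ≤ a−1 (where I^0 = ∅), every x₀ ∈ ℝ with |x₀ − t₀| ≤ αL, and every y with L/α ≤ y ≤ αL, one has ∫_{Γ ∩ I^a} y^{p−1} / ((t−x₀)² + y²)^{p/2} dt ≤ C·δ. -/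
open MeasureTheory Set

set_option maxHeartbeats 1000000 in
theorem stmt15 (p α : ℝ) (hp : 1 < p) (hα : 1 ≤ α) :
    ∃ C : ℝ, 0 < C ∧
      ∀ a : ℕ, 1 ≤ a → ∀ δ : ℝ, 0 < δ → ∀ L : ℝ, 0 < L → ∀ t₀ : ℝ,
      ∀ Γ : Set ℝ, MeasurableSet Γ →
      (∀ ℓ : ℕ, ℓ + 1 ≤ a →
        volume (Γ ∩ (Set.Icc (t₀ - ((ℓ : ℝ) + 1) * L / 2) (t₀ + ((ℓ : ℝ) + 1) * L / 2) \
            (if ℓ = 0 then (∅ : Set ℝ)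
              else Set.Icc (t₀ - (ℓ : ℝ) * L / 2) (t₀ + (ℓ : ℝ) * L / 2))))
          ≤ ENNReal.ofReal (δ * L)) →
      ∀ x₀ : ℝ, |x₀ - t₀| ≤ α * L →
      ∀ y : ℝ, L / α ≤ y → y ≤ α * L →
        ∫ t in Γ ∩ Set.Icc (t₀ - (a : ℝ) * L / 2) (t₀ + (a : ℝ) * L / 2),
            y ^ (p - 1) / ((t - x₀) ^ 2 + y ^ 2) ^ (p / 2)
          ≤ C * δ := by
  have hp0 : (0:ℝ) < p := by linarith
  have hα0 : (0:ℝ) < α := by linarith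
  set K : ℝ := (8*α^2)^p * α^(p-1) with hKdef
  have hK0 : 0 < K :=
    mul_pos (Real.rpow_pos_of_pos (by positivity) _) (Real.rpow_pos_of_pos hα0 _)
  have hsum : Summable (fun ℓ : ℕ => 1 / ((ℓ:ℝ)+1)^p) := by
    have h1 : Summable (fun n : ℕ => 1 / (n:ℝ)^p) :=
      Real.summable_one_div_nat_rpow.mpr hp
    have h2 := (summable_nat_add_iff 1).mpr h1
    have he : (fun n : ℕ => 1 / ((n+1 : ℕ):ℝ)^p) = fun n : ℕ => 1 / ((n:ℝ)+1)^p := by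
      funext n; push_cast; ring_nf
    rwa [he] at h2
  set S : ℝ := ∑' ℓ : ℕ, 1 / ((ℓ:ℝ)+1)^p with hSdef
  have hS0 : 0 ≤ S := tsum_nonneg fun ℓ => by positivity
  refine ⟨K * (S + 1), by positivity, ?_⟩
  intro a ha δ hδ L hL t₀ Γ hΓ hlayer x₀ hx₀ y hy1 hy2
  have hy0 : 0 < y := lt_of_lt_of_le (by positivity) hy1
  set f : ℝ → ℝ := fun t => y ^ (p - 1) / ((t - x₀) ^ 2 + y ^ 2) ^ (p / 2) with hfdef
  set J : ℕ → Set ℝ := fun ℓ =>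
    Set.Icc (t₀ - ((ℓ : ℝ) + 1) * L / 2) (t₀ + ((ℓ : ℝ) + 1) * L / 2) \
      (if ℓ = 0 then (∅ : Set ℝ)
        else Set.Icc (t₀ - (ℓ : ℝ) * L / 2) (t₀ + (ℓ : ℝ) * L / 2)) with hJdef
  have hcont : Continuous f := by
    apply Continuous.div continuous_const
    · apply Continuous.rpow_const
      · continuity
      · intro t; right; positivity
    · intro t
      exact ne_of_gt (Real.rpow_pos_of_pos (by positivity) _)
  have hJm : ∀ ℓ, MeasurableSet (J ℓ) := by
    intro ℓ
    apply MeasurableSet.diff measurableSet_Icc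
    split
    · exact MeasurableSet.empty
    · exact measurableSet_Icc
  -- the layers fill up the big interval
  have hunion : ∀ b : ℕ, 1 ≤ b →
      ⋃ ℓ ∈ Finset.range b, J ℓ =
        Set.Icc (t₀ - (b : ℝ) * L / 2) (t₀ + (b : ℝ) * L / 2) := by
    intro b hb
    induction b, hb using Nat.le_induction with
    | base =>
      simp only [Finset.range_one, Finset.set_biUnion_singleton, hJdef]
      norm_num
    | succ n hn ih =>
      rw [Finset.range_add_one, Finset.set_biUnion_insert, ih]
      have hne : n ≠ 0 := by omega
      have hn0 : (0:ℝ) ≤ (n:ℝ) := Nat.cast_nonneg n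
      have hJn : J n = Set.Icc (t₀ - ((n:ℝ)+1)*L/2) (t₀ + ((n:ℝ)+1)*L/2) \
          Set.Icc (t₀ - (n:ℝ)*L/2) (t₀ + (n:ℝ)*L/2) := by
        simp only [hJdef]; rw [if_neg hne]
      rw [hJn]
      push_cast
      exact Set.diff_union_of_subset
        (Set.Icc_subset_Icc (by nlinarith) (by nlinarith))
  have hsub : Γ ∩ Set.Icc (t₀ - (a : ℝ) * L / 2) (t₀ + (a : ℝ) * L / 2)
      = ⋃ ℓ ∈ Finset.range a, (Γ ∩ J ℓ) := by
    rw [← hunion a ha, Set.inter_iUnion₂]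
  -- integrability
  have hint : ∀ ℓ : ℕ, IntegrableOn f (Γ ∩ J ℓ) volume := by
    intro ℓ
    exact (hcont.integrableOn_Icc
      (a := t₀ - ((ℓ:ℝ)+1)*L/2) (b := t₀ + ((ℓ:ℝ)+1)*L/2)).mono_set
      (Set.inter_subset_right.trans Set.diff_subset)
  -- disjointness
  have hd : ∀ i j : ℕ, i < j → Disjoint (J i) (J j) := by
    intro i j hij
    have hj0 : j ≠ 0 := by omega
    rw [Set.disjoint_left]
    intro t hti htj
    have htj2 : t ∉ Set.Icc (t₀ - (j:ℝ)*L/2) (t₀ + (j:ℝ)*L/2) := by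
      have := htj.2
      rw [if_neg hj0] at this
      exact this
    apply htj2
    have hti1 : t ∈ Set.Icc (t₀ - ((i:ℝ)+1)*L/2) (t₀ + ((i:ℝ)+1)*L/2) := hti.1
    have hij' : ((i:ℝ)+1) ≤ (j:ℝ) := by exact_mod_cast hij
    exact Set.Icc_subset_Icc (by nlinarith) (by nlinarith) hti1
  have hdisj : Set.Pairwise ↑(Finset.range a) (Function.onFun Disjoint fun ℓ => Γ ∩ J ℓ) := by
    intro i _ j _ hne
    rcases hne.lt_or_gt with h | h
    · exact ((hd i j h).mono Set.inter_subset_right Set.inter_subset_right)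
    · exact ((hd j i h).symm.mono Set.inter_subset_right Set.inter_subset_right)
  -- pointwise bound on each layer
  have key : ∀ ℓ : ℕ, ∀ t ∈ Γ ∩ J ℓ, f t ≤ K / (((ℓ:ℝ)+1)^p * L) := by
    intro ℓ t ht
    set m : ℝ := (ℓ:ℝ) + 1 with hmdef
    have hm1 : 1 ≤ m := by
      have : (0:ℝ) ≤ (ℓ:ℝ) := Nat.cast_nonneg ℓ
      simp only [hmdef]; linarith
    have hm0 : 0 < m := by linarith
    set r : ℝ := m * L / (8*α^2) with hrdef
    have hr0 : 0 < r := by positivity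
    have hαL : L ≤ α * L := le_mul_of_one_le_left hL.le hα
    have hden : r^2 ≤ (t - x₀)^2 + y^2 := by
      rcases le_or_gt m (8*α) with hcase | hcase
      · have hry : r ≤ y := by
          have h1 : r ≤ L / α := by
            rw [hrdef, div_le_div_iff₀ (by positivity) hα0]
            have h2 := mul_le_mul_of_nonneg_right
              (mul_le_mul_of_nonneg_right hcase hL.le) hα0.le
            linarith
          linarith
        have h2 : r^2 ≤ y^2 := pow_le_pow_left₀ hr0.le hry 2
        linarith [sq_nonneg (t - x₀)]
      · have hℓ0 : ℓ ≠ 0 := by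
          intro h0
          rw [h0] at hmdef
          simp at hmdef
          nlinarith
        have htnot : t ∉ Set.Icc (t₀ - (ℓ:ℝ)*L/2) (t₀ + (ℓ:ℝ)*L/2) := by
          have := ht.2.2
          rwa [if_neg hℓ0] at this
        rw [Set.mem_Icc, not_and_or, not_le, not_le] at htnot
        have hx := abs_le.mp hx₀
        have hk : (ℓ:ℝ) * L = m * L - L := by rw [hmdef]; ring
        have h8 : 8 * (α * L) ≤ m * L := by
          have := mul_le_mul_of_nonneg_right hcase.le hL.le
          linarith
        have hrle : r ≤ m*L/8 := by
          rw [hrdef]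
          gcongr
          nlinarith [sq_nonneg (α - 1)]
        rcases htnot with hlt | hgt
        · have h1 : m*L/8 ≤ x₀ - t := by linarith [hx.1]
          have h2 : r^2 ≤ (x₀ - t)^2 := pow_le_pow_left₀ hr0.le (hrle.trans h1) 2
          have h3 : (x₀ - t)^2 = (t - x₀)^2 := by ring
          linarith [sq_nonneg y]
        · have h1 : m*L/8 ≤ t - x₀ := by linarith [hx.2]
          have h2 : r^2 ≤ (t - x₀)^2 := pow_le_pow_left₀ hr0.le (hrle.trans h1) 2
          linarith [sq_nonneg y]
    have hDpos : (0:ℝ) < (t - x₀)^2 + y^2 := by positivity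
    have hrp : (0:ℝ) < r^p := Real.rpow_pos_of_pos hr0 _
    have h1 : r^p ≤ ((t - x₀)^2 + y^2)^(p/2) := by
      have he : r^p = (r^2)^(p/2) := by
        rw [← Real.rpow_natCast r 2, ← Real.rpow_mul hr0.le]
        norm_num
        congr 1
        ring
      rw [he]
      exact Real.rpow_le_rpow (by positivity) hden (by positivity)
    have h2 : f t ≤ y^(p-1) / r^p := by
      simp only [hfdef]
      exact div_le_div_of_nonneg_left (Real.rpow_nonneg hy0.le _) hrp h1
    have h3 : y^(p-1) / r^p ≤ (α*L)^(p-1) / r^p :=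
      (div_le_div_iff_of_pos_right hrp).mpr (Real.rpow_le_rpow hy0.le hy2 (by linarith : (0:ℝ) ≤ p - 1))
    have h4 : (α*L)^(p-1) / r^p = K / (m^p * L) := by
      have hmp : (0:ℝ) < m^p := Real.rpow_pos_of_pos hm0 _
      have hA : (0:ℝ) < (8*α^2)^p := Real.rpow_pos_of_pos (by positivity) _
      have hLp1 : (0:ℝ) < L^(p-1) := Real.rpow_pos_of_pos hL _
      have hrp_eq : r^p = m^p * L^p / (8*α^2)^p := by
        rw [hrdef, Real.div_rpow (by positivity) (by positivity),
          Real.mul_rpow hm0.le hL.le]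
      have hLp : L^p = L^(p-1) * L := by
        have := Real.rpow_add hL (p-1) 1
        rw [show p - 1 + 1 = p by ring, Real.rpow_one] at this
        exact this
      have hαLp : (α*L)^(p-1) = α^(p-1) * L^(p-1) :=
        Real.mul_rpow hα0.le hL.le
      rw [hrp_eq, hαLp, hLp, hKdef]
      field_simp
    calc f t ≤ y^(p-1) / r^p := h2
      _ ≤ (α*L)^(p-1) / r^p := h3
      _ = K / (m^p * L) := h4
  -- per-layer integral bound
  have term : ∀ ℓ ∈ Finset.range a, (∫ t in Γ ∩ J ℓ, f t)
      ≤ K * δ * (1 / (((ℓ:ℝ)+1)^p)) := by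
    intro ℓ hℓ
    have hmem : ℓ + 1 ≤ a := Finset.mem_range.mp hℓ
    have hvol : volume (Γ ∩ J ℓ) ≤ ENNReal.ofReal (δ * L) := hlayer ℓ hmem
    have hvol' : (volume (Γ ∩ J ℓ)).toReal ≤ δ * L :=
      ENNReal.toReal_le_of_le_ofReal (by positivity) hvol
    have hfin : volume (Γ ∩ J ℓ) < ⊤ := lt_of_le_of_lt hvol ENNReal.ofReal_lt_top
    have hmp : (0:ℝ) < ((ℓ:ℝ)+1)^p := Real.rpow_pos_of_pos (by positivity) _
    have hMnn : (0:ℝ) ≤ K / (((ℓ:ℝ)+1)^p * L) := by positivity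
    calc (∫ t in Γ ∩ J ℓ, f t)
        ≤ ∫ _t in Γ ∩ J ℓ, K / (((ℓ:ℝ)+1)^p * L) :=
          setIntegral_mono_on (hint ℓ) (integrableOn_const hfin.ne)
            (hΓ.inter (hJm ℓ)) (key ℓ)
      _ = (volume (Γ ∩ J ℓ)).toReal * (K / (((ℓ:ℝ)+1)^p * L)) := by
          rw [setIntegral_const, smul_eq_mul]
          rfl
      _ ≤ (δ * L) * (K / (((ℓ:ℝ)+1)^p * L)) :=
          mul_le_mul_of_nonneg_right hvol' hMnn
      _ = K * δ * (1 / (((ℓ:ℝ)+1)^p)) := by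
          field_simp
  -- put it together
  have hsumle : ∑ ℓ ∈ Finset.range a, (1 / (((ℓ:ℝ)+1)^p)) ≤ S :=
    Summable.sum_le_tsum (Finset.range a) (fun i _ => by positivity) hsum
  calc (∫ t in Γ ∩ Set.Icc (t₀ - (a : ℝ) * L / 2) (t₀ + (a : ℝ) * L / 2), f t)
      = ∑ ℓ ∈ Finset.range a, ∫ t in Γ ∩ J ℓ, f t := by
        rw [hsub]
        exact integral_biUnion_finset _ (fun ℓ _ => hΓ.inter (hJm ℓ)) hdisj
          (fun ℓ _ => hint ℓ)
    _ ≤ ∑ ℓ ∈ Finset.range a, K * δ * (1 / (((ℓ:ℝ)+1)^p)) :=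
        Finset.sum_le_sum term
    _ = K * δ * ∑ ℓ ∈ Finset.range a, (1 / (((ℓ:ℝ)+1)^p)) := by
        rw [Finset.mul_sum]
    _ ≤ K * δ * S := by
        apply mul_le_mul_of_nonneg_left hsumle (by positivity)
    _ ≤ K * (S + 1) * δ := by nlinarith
end
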